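/- arXiv:1412.7979 — 11 statements merged into one kernel-verified Lean document; each statement's English description precedes it below -/
import Mathlib

section
/- Let n ≥ 1, let S ⊆ ℝⁿ be a measurable set that is symmetric (S = -S), and let s > 0. Then for every y ∈ ℝⁿ, the Gaussian measure satisfies γ_s(S + y) ≥ γ_s(S) · exp(-π‖y‖²/s²). -/
set_option maxHeartbeats 1000000

open MeasureTheory

/-- The Gaussian measure `γ_s(A) = s^{-n} ∫_A exp(-π‖x‖²/s²) dx`. -/
noncomputable def gaussMeasure (n : ℕ) (s : ℝ) (A : Set (EuclideanSpace ℝ (Fin n))) : ℝ :=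
  (s ^ n)⁻¹ * ∫ x in A, Real.exp (-Real.pi * ‖x‖ ^ 2 / s ^ 2)

lemma integrable_gauss_aux (n : ℕ) (s : ℝ) (hs : 0 < s) :
    Integrable (fun x : EuclideanSpace ℝ (Fin n) => Real.exp (-Real.pi * ‖x‖ ^ 2 / s ^ 2)) := by
  have hb : (0:ℝ) < ((Real.pi / s ^ 2 : ℝ) : ℂ).re := by
    rw [Complex.ofReal_re]; positivity
  have h := (GaussianFourier.integrable_cexp_neg_mul_sq_norm_add (V := EuclideanSpace ℝ (Fin n))
    (b := ((Real.pi / s ^ 2 : ℝ) : ℂ)) hb 0 0).re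
  refine h.congr (Filter.Eventually.of_forall fun x => ?_)
  have hx : -(((Real.pi / s ^ 2 : ℝ)) : ℂ) * (‖x‖:ℂ) ^ 2 +
      0 * ((inner ℝ (0 : EuclideanSpace ℝ (Fin n)) x : ℝ) : ℂ) =
      ((-Real.pi * ‖x‖ ^ 2 / s ^ 2 : ℝ) : ℂ) := by
    push_cast
    ring
  simp only [RCLike.re_to_complex]
  rw [hx, Complex.exp_ofReal_re]

theorem gaussian_translate (n : ℕ) (hn : 1 ≤ n) (S : Set (EuclideanSpace ℝ (Fin n)))
    (hS : MeasurableSet S) (hsym : S = -S) (s : ℝ) (hs : 0 < s)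
    (y : EuclideanSpace ℝ (Fin n)) :
    gaussMeasure n s ((fun x => x + y) '' S) ≥
      gaussMeasure n s S * Real.exp (-Real.pi * ‖y‖ ^ 2 / s ^ 2) := by
  set f : EuclideanSpace ℝ (Fin n) → ℝ :=
    fun x => Real.exp (-Real.pi * ‖x‖ ^ 2 / s ^ 2) with hf
  have hint : Integrable f := integrable_gauss_aux n s hs
  -- translation
  have embAdd : MeasurableEmbedding (fun x : EuclideanSpace ℝ (Fin n) => x + y) :=
    (Homeomorph.addRight y).measurableEmbedding
  have mpAdd : MeasurePreserving (fun x : EuclideanSpace ℝ (Fin n) => x + y) volume volume :=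
    measurePreserving_add_right volume y
  have h1 : ∫ x in (fun x => x + y) '' S, f x = ∫ x in S, f (x + y) :=
    mpAdd.setIntegral_image_emb embAdd f S
  -- negation
  have embNeg : MeasurableEmbedding (fun x : EuclideanSpace ℝ (Fin n) => -x) :=
    (Homeomorph.neg _).measurableEmbedding
  have mpNeg : MeasurePreserving (fun x : EuclideanSpace ℝ (Fin n) => -x) volume volume :=
    Measure.measurePreserving_neg volume
  have himg : (fun x : EuclideanSpace ℝ (Fin n) => -x) '' S = S := by
    conv_lhs => rw [hsym]
    ext x
    simp [Set.mem_neg]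
  have h2 : ∫ x in S, f (x + y) = ∫ x in S, f (x - y) := by
    conv_lhs => rw [← himg]
    rw [mpNeg.setIntegral_image_emb embNeg (fun x => f (x + y)) S]
    congr 1
    ext x
    simp only [hf]
    rw [show ‖-x + y‖ = ‖x - y‖ by rw [← norm_neg]; congr 1; abel]
  -- integrability of translates on S
  have hintAdd : Integrable (fun x => f (x + y)) :=
    (mpAdd.integrable_comp_emb embAdd).2 hint
  have hintSub : Integrable (fun x => f (x - y)) := by
    have := (measurePreserving_add_right volume (-y)).integrable_comp_emb
      ((Homeomorph.addRight (-y)).measurableEmbedding) |>.2 hint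
    simpa [sub_eq_add_neg, Function.comp_def] using this
  set E := Real.exp (-Real.pi * ‖y‖ ^ 2 / s ^ 2) with hE
  -- pointwise: (f(x+y) + f(x-y))/2 ≥ f x * E
  have key : ∀ x : EuclideanSpace ℝ (Fin n), f x * E ≤ (f (x + y) + f (x - y)) / 2 := by
    intro x
    have hpar : ‖x + y‖ ^ 2 + ‖x - y‖ ^ 2 = 2 * ‖x‖ ^ 2 + 2 * ‖y‖ ^ 2 := by
      have := parallelogram_law_with_norm ℝ x y
      nlinarith [this]
    set a := -Real.pi * ‖x + y‖ ^ 2 / s ^ 2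
    set b := -Real.pi * ‖x - y‖ ^ 2 / s ^ 2
    have hab : (a + b) / 2 = -Real.pi * ‖x‖ ^ 2 / s ^ 2 + -Real.pi * ‖y‖ ^ 2 / s ^ 2 := by
      simp only [a, b]
      have hs2 : (s:ℝ) ^ 2 ≠ 0 := by positivity
      field_simp
      linear_combination (-1 : ℝ) * hpar
    have h3 : f x * E = Real.exp ((a + b) / 2) := by
      rw [hab, Real.exp_add]
    have h4 : Real.exp ((a + b) / 2) ≤ (Real.exp a + Real.exp b) / 2 := by
      have e1 : Real.exp a = Real.exp (a / 2) ^ 2 := by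
        rw [← Real.exp_nat_mul]; ring_nf
      have e2 : Real.exp b = Real.exp (b / 2) ^ 2 := by
        rw [← Real.exp_nat_mul]; ring_nf
      have e3 : Real.exp ((a + b) / 2) = Real.exp (a / 2) * Real.exp (b / 2) := by
        rw [← Real.exp_add]; ring_nf
      nlinarith [sq_nonneg (Real.exp (a / 2) - Real.exp (b / 2))]
    rw [h3]; exact h4.trans_eq (by rfl)
  -- integrate the inequality over S
  have hmain : (∫ x in S, f x) * E ≤ ∫ x in S, f (x + y) := by
    have step : ∫ x in S, f x * E ≤ ∫ x in S, (f (x + y) + f (x - y)) / 2 := by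
      refine setIntegral_mono ((hint.integrableOn).mul_const E) ?_ key
      exact ((hintAdd.add hintSub).div_const 2).integrableOn
    rw [integral_mul_const] at step
    have : ∫ x in S, (f (x + y) + f (x - y)) / 2 = ∫ x in S, f (x + y) := by
      rw [integral_div, integral_add hintAdd.integrableOn hintSub.integrableOn, ← h2]
      ring
    linarith [step, this.le, this.ge]
  -- conclude
  have hsn : (0:ℝ) < (s ^ n)⁻¹ := by positivity
  simp only [gaussMeasure, ge_iff_le]
  rw [h1]
  calc (s ^ n)⁻¹ * (∫ x in S, f x) * E = (s ^ n)⁻¹ * ((∫ x in S, f x) * E) := by ring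
    _ ≤ (s ^ n)⁻¹ * ∫ x in S, f (x + y) := by
        exact mul_le_mul_of_nonneg_left hmain hsn.le
end

section
/- Let Λ ⊆ ℝⁿ be a full-rank lattice with Voronoi cell V(Λ), and let s > 0. Then 1 - γ_s(V(Λ)) ≤ ρ_{2s}(Λ \ {0}), i.e., the Gaussian measure of the complement of the Voronoi cell is at most the discrete Gaussian mass of the nonzero lattice points at parameter 2s. -/
open MeasureTheory

open Real in
lemma sum1 {t : ℝ} (ht : 0 < t) :
    Summable (fun m : ℕ => Real.exp (-t * (m:ℝ)^2)) := by
  have hgeo : Summable (fun m : ℕ => Real.exp (-t) ^ m) :=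
    summable_geometric_of_lt_one (Real.exp_pos _).le (Real.exp_lt_one_iff.mpr (by linarith))
  refine Summable.of_nonneg_of_le (fun m => (Real.exp_pos _).le) ?_ hgeo
  intro m
  rw [← Real.exp_nat_mul]
  apply Real.exp_le_exp.mpr
  have hm : (m:ℝ) ≤ (m:ℝ)^2 := by exact_mod_cast Nat.le_self_pow two_ne_zero m
  nlinarith

lemma sumZ {t : ℝ} (ht : 0 < t) :
    Summable (fun k : ℤ => Real.exp (-t * (k:ℝ)^2)) := by
  apply Summable.of_nat_of_neg <;>
    · apply (sum1 ht).congr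
      intro m
      push_cast
      ring_nf

lemma sumPi {t : ℝ} (ht : 0 < t) (m : ℕ) :
    Summable (fun z : Fin m → ℤ => Real.exp (-t * ∑ i, ((z i : ℝ))^2)) := by
  induction m with
  | zero => exact Summable.of_finite
  | succ m IH =>
    have hprod : Summable (fun p : ℤ × (Fin m → ℤ) =>
        Real.exp (-t * (p.1:ℝ)^2) * Real.exp (-t * ∑ i, ((p.2 i : ℝ))^2)) := by
      apply Summable.mul_of_nonneg (sumZ ht) IH
      · intro x; exact (Real.exp_pos _).le
      · intro x; exact (Real.exp_pos _).le
    refine ((Fin.consEquiv (fun _ : Fin (m+1) => ℤ)).summable_iff).mp ?_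
    apply hprod.congr
    intro p
    simp only [Function.comp, Fin.consEquiv_apply, Fin.sum_univ_succ, Fin.cons_zero,
      Fin.cons_succ, ← Real.exp_add]
    congr 1
    ring

lemma sumLat {n : ℕ} (b : Module.Basis (Fin n) ℝ (EuclideanSpace ℝ (Fin n))) {t : ℝ} (ht : 0 < t) :
    Summable (fun z : Fin n → ℤ => Real.exp (-t * ‖∑ i, (z i : ℝ) • b i‖^2)) := by
  set L := b.equivFunL with hL
  set C : ℝ := ‖(L : EuclideanSpace ℝ (Fin n) →L[ℝ] (Fin n → ℝ))‖ + 1 with hC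
  have hCpos : 0 < C := by
    have : (0:ℝ) ≤ ‖(L : EuclideanSpace ℝ (Fin n) →L[ℝ] (Fin n → ℝ))‖ := norm_nonneg _
    linarith
  set D : ℝ := n * C^2 + 1 with hD
  have hDpos : 0 < D := by positivity
  have key : ∀ z : Fin n → ℤ, (∑ i, ((z i:ℝ))^2) ≤ D * ‖∑ i, (z i : ℝ) • b i‖^2 := by
    intro z
    set x := ∑ i, (z i : ℝ) • b i with hx
    set zr : Fin n → ℝ := fun i => (z i : ℝ) with hzr
    have hrepr : b.equivFun x = zr := by
      rw [hx, hzr]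
      ext j
      simp [Module.Basis.equivFun_apply, map_sum, Finsupp.single_apply]
    have hnorm : ‖zr‖ ≤ C * ‖x‖ := by
      rw [← hrepr]
      calc ‖b.equivFun x‖ = ‖L x‖ := rfl
        _ ≤ ‖(L : EuclideanSpace ℝ (Fin n) →L[ℝ] (Fin n → ℝ))‖ * ‖x‖ :=
            (L : EuclideanSpace ℝ (Fin n) →L[ℝ] (Fin n → ℝ)).le_opNorm x
        _ ≤ C * ‖x‖ := by
            apply mul_le_mul_of_nonneg_right _ (norm_nonneg x)
            simp [hC]
    have hcoord : ∀ i, |(z i : ℝ)| ≤ C * ‖x‖ := by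
      intro i
      refine le_trans ?_ hnorm
      have := norm_le_pi_norm zr i
      simpa [hzr] using this
    calc (∑ i, ((z i:ℝ))^2) ≤ ∑ _i : Fin n, (C * ‖x‖)^2 := by
          apply Finset.sum_le_sum
          intro i _
          have h1 := hcoord i
          have h2 : (0:ℝ) ≤ |(z i : ℝ)| := abs_nonneg _
          calc ((z i:ℝ))^2 = |(z i : ℝ)|^2 := (sq_abs _).symm
            _ ≤ (C * ‖x‖)^2 := by nlinarith
      _ = n * (C * ‖x‖)^2 := by simp [Finset.sum_const]
      _ ≤ D * ‖x‖^2 := by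
          have hn : (0:ℝ) ≤ n := Nat.cast_nonneg n
          have hx2 : (0:ℝ) ≤ ‖x‖^2 := sq_nonneg _
          rw [hD]; ring_nf; nlinarith
  refine Summable.of_nonneg_of_le (fun z => (Real.exp_pos _).le) ?_ (sumPi (t := t / D) (by positivity) n)
  intro z
  apply Real.exp_le_exp.mpr
  have hk := key z
  rw [neg_mul, neg_mul, neg_le_neg_iff, div_mul_eq_mul_div, div_le_iff₀ hDpos]
  nlinarith [sq_nonneg ‖∑ i, (z i : ℝ) • b i‖]

lemma intGauss {n : ℕ} {a : ℝ} (ha : 0 < a) :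
    Integrable (fun x : EuclideanSpace ℝ (Fin n) => Real.exp (-a * ‖x‖^2)) := by
  have h := GaussianFourier.integrable_cexp_neg_mul_sq_norm_add
    (V := EuclideanSpace ℝ (Fin n)) (b := (a:ℂ)) (by simpa using ha) 0 0
  have h2 := h.norm
  apply h2.congr
  filter_upwards with x
  rw [Complex.norm_exp]
  have : ((-a : ℂ) * (‖x‖:ℂ)^2 + 0 * ((inner ℝ (0:EuclideanSpace ℝ (Fin n)) x : ℝ) : ℂ)).re
      = -a * ‖x‖^2 := by
    simp [Complex.add_re, Complex.mul_re, ← Complex.ofReal_pow]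
  rw [this]

lemma gaussTotal {n : ℕ} {s : ℝ} (hs : 0 < s) :
    ∫ x : EuclideanSpace ℝ (Fin n), Real.exp (-(Real.pi/s^2) * ‖x‖^2) = s ^ n := by
  rw [GaussianFourier.integral_rexp_neg_mul_sq_norm (by positivity)]
  rw [finrank_euclideanSpace_fin]
  have h1 : (Real.pi / (Real.pi / s^2)) = s^2 := by
    rw [div_div_eq_mul_div, mul_comm, mul_div_assoc, div_self Real.pi_pos.ne', mul_one]
  rw [h1, ← Real.rpow_natCast s n, ← Real.rpow_natCast s 2, ← Real.rpow_mul hs.le]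
  congr 1
  push_cast
  ring

lemma halfspace {n : ℕ} {s : ℝ} (hs : 0 < s) (y : EuclideanSpace ℝ (Fin n)) :
    ∫⁻ x in {x : EuclideanSpace ℝ (Fin n) | ‖x - y‖ < ‖x‖},
        ENNReal.ofReal (Real.exp (-Real.pi * ‖x‖^2 / s^2))
      ≤ ENNReal.ofReal (Real.exp (-Real.pi * ‖y‖^2 / (2*s)^2) * s ^ n) := by
  have hs2 : (0:ℝ) < s^2 := by positivity
  set c := (2⁻¹ : ℝ) • y with hcdef
  set g : EuclideanSpace ℝ (Fin n) → ℝ :=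
    fun x => Real.exp (-Real.pi * ‖y‖^2 / (2*s)^2) * Real.exp (-(Real.pi/s^2) * ‖x - c‖^2)
    with hg
  have hgcont : Continuous g := by
    apply Continuous.mul continuous_const
    apply Real.continuous_exp.comp
    apply Continuous.mul continuous_const
    exact ((continuous_id.sub continuous_const).norm).pow 2
  have hgint : Integrable g := by
    apply Integrable.const_mul
    exact (intGauss (n := n) (a := Real.pi/s^2) (by positivity)).comp_sub_right c
  have hpt : ∀ x ∈ {x : EuclideanSpace ℝ (Fin n) | ‖x - y‖ < ‖x‖},
      ENNReal.ofReal (Real.exp (-Real.pi * ‖x‖^2 / s^2)) ≤ ENNReal.ofReal (g x) := by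
    intro x hx
    apply ENNReal.ofReal_le_ofReal
    rw [hg]
    simp only []
    rw [← Real.exp_add]
    apply Real.exp_le_exp.mpr
    have h2 : ‖x-y‖^2 ≤ ‖x‖^2 := by
      apply pow_le_pow_left₀ (norm_nonneg _) (le_of_lt hx)
    rw [norm_sub_sq_real] at h2
    have hinner : ‖y‖^2 ≤ 2 * (inner ℝ x y : ℝ) := by linarith
    have hc : ‖x - c‖^2 = ‖x‖^2 - (inner ℝ x y : ℝ) + ‖y‖^2/4 := by
      rw [hcdef, norm_sub_sq_real, real_inner_smul_right, norm_smul]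
      simp [Real.norm_eq_abs, abs_of_pos]
      ring
    have key : ‖x - c‖^2 + ‖y‖^2/4 ≤ ‖x‖^2 := by rw [hc]; linarith
    have e1 : -Real.pi*‖y‖^2/(2*s)^2 + (-(Real.pi/s^2)*‖x-c‖^2)
        = (-Real.pi*(‖y‖^2/4 + ‖x-c‖^2))/s^2 := by
      field_simp
      ring
    rw [e1]
    rw [div_le_div_iff_of_pos_right hs2]
    nlinarith [Real.pi_pos]
  calc ∫⁻ x in {x : EuclideanSpace ℝ (Fin n) | ‖x - y‖ < ‖x‖},
        ENNReal.ofReal (Real.exp (-Real.pi * ‖x‖^2 / s^2))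
      ≤ ∫⁻ x in {x : EuclideanSpace ℝ (Fin n) | ‖x - y‖ < ‖x‖}, ENNReal.ofReal (g x) :=
        setLIntegral_mono (hgcont.measurable.ennreal_ofReal) hpt
    _ ≤ ∫⁻ x, ENNReal.ofReal (g x) := setLIntegral_le_lintegral _ _
    _ = ENNReal.ofReal (∫ x, g x) := by
        rw [ofReal_integral_eq_lintegral_ofReal hgint]
        filter_upwards with x
        positivity
    _ = ENNReal.ofReal (Real.exp (-Real.pi * ‖y‖^2 / (2*s)^2) * s ^ n) := by
        congr 1
        rw [hg]
        simp only []
        rw [integral_const_mul]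
        congr 1
        rw [integral_sub_right_eq_self (fun x : EuclideanSpace ℝ (Fin n) =>
          Real.exp (-(Real.pi/s^2) * ‖x‖^2)) c]
        exact gaussTotal hs

/-- The discrete Gaussian mass `ρ_s(A) = ∑_{x ∈ A} exp(-π‖x‖²/s²)`. -/
noncomputable def rhoSet (n : ℕ) (s : ℝ) (A : Set (EuclideanSpace ℝ (Fin n))) : ℝ :=
  ∑' x : A, Real.exp (-Real.pi * ‖(x : EuclideanSpace ℝ (Fin n))‖ ^ 2 / s ^ 2)

/-- `Λ` is a full-rank lattice in ℝⁿ: the set of integer combinations of an ℝ-basis. -/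
def IsLattice {n : ℕ} (Λ : Set (EuclideanSpace ℝ (Fin n))) : Prop :=
  ∃ b : Module.Basis (Fin n) ℝ (EuclideanSpace ℝ (Fin n)),
    Λ = {x | ∃ z : Fin n → ℤ, x = ∑ i, (z i : ℝ) • b i}

/-- The (closed) Voronoi cell of a lattice. -/
def voronoiCell {n : ℕ} (Λ : Set (EuclideanSpace ℝ (Fin n))) :
    Set (EuclideanSpace ℝ (Fin n)) :=
  {x | ∀ y ∈ Λ, ‖x‖ ≤ ‖x - y‖}

set_option maxHeartbeats 2000000 in
theorem voronoi_gaussian_upper (n : ℕ) (Λ : Set (EuclideanSpace ℝ (Fin n)))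
    (hΛ : IsLattice Λ) (s : ℝ) (hs : 0 < s) :
    1 - gaussMeasure n s (voronoiCell Λ) ≤ rhoSet n (2 * s) (Λ \ {0}) := by
  obtain ⟨b, hb⟩ := hΛ
  have hsn : (0:ℝ) < s ^ n := pow_pos hs n
  have hfrw : ∀ x : EuclideanSpace ℝ (Fin n),
      -Real.pi * ‖x‖^2 / s^2 = -(Real.pi/s^2) * ‖x‖^2 := fun x => by ring
  have hfint : Integrable (fun x : EuclideanSpace ℝ (Fin n) =>
      Real.exp (-Real.pi * ‖x‖ ^ 2 / s ^ 2)) := by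
    simp_rw [hfrw]
    exact intGauss (by positivity)
  have hI : ∫ x : EuclideanSpace ℝ (Fin n), Real.exp (-Real.pi * ‖x‖ ^ 2 / s ^ 2) = s ^ n := by
    simp_rw [hfrw]
    exact gaussTotal hs
  have hVclosed : IsClosed (voronoiCell Λ) := by
    have hveq : voronoiCell Λ
        = ⋂ y ∈ Λ, {x : EuclideanSpace ℝ (Fin n) | ‖x‖ ≤ ‖x - y‖} := by
      ext x; simp [voronoiCell]
    rw [hveq]
    exact isClosed_biInter fun y _ =>
      isClosed_le continuous_norm ((continuous_id.sub continuous_const).norm)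
  have hV : MeasurableSet (voronoiCell Λ) := hVclosed.measurableSet
  set φ : (Fin n → ℤ) → EuclideanSpace ℝ (Fin n) := fun z => ∑ i, (z i : ℝ) • b i with hφ
  have hΛr : Λ = Set.range φ := by
    rw [hb]; ext x; simp [hφ, eq_comm]
  have hrepr : ∀ z : Fin n → ℤ, b.equivFun (φ z) = fun i => (z i : ℝ) := by
    intro z
    ext j
    simp [hφ, Module.Basis.equivFun_apply, map_sum, Finsupp.single_apply]
  have hφinj : Function.Injective φ := by
    intro z w hzw
    have h1 : b.equivFun (φ z) = b.equivFun (φ w) := by rw [hzw]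
    rw [hrepr z, hrepr w] at h1
    funext i
    have := congrFun h1 i
    exact_mod_cast this
  have hΛcnt : (Λ \ {0}).Countable :=
    ((hΛr ▸ Set.countable_range φ).mono Set.diff_subset)
  haveI := hΛcnt.to_subtype
  -- summability
  have h4 : ∀ x : EuclideanSpace ℝ (Fin n),
      -Real.pi * ‖x‖^2/(2*s)^2 = -(Real.pi/(4*s^2)) * ‖x‖^2 := fun x => by ring
  have hsum0 : Summable (fun z : Fin n → ℤ => Real.exp (-Real.pi * ‖φ z‖^2 / (2*s)^2)) := by
    simp_rw [h4]
    exact sumLat b (by positivity)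
  have hsumΛ : Summable (fun y : ↥Λ =>
      Real.exp (-Real.pi * ‖(y : EuclideanSpace ℝ (Fin n))‖^2 / (2*s)^2)) := by
    rw [hΛr, ← (Equiv.ofInjective φ hφinj).summable_iff]
    apply hsum0.congr
    intro z
    simp [Equiv.ofInjective_apply]
  have hsum : Summable (fun y : ↥(Λ \ {0}) =>
      Real.exp (-Real.pi * ‖(y : EuclideanSpace ℝ (Fin n))‖^2 / (2*s)^2)) := by
    have h := hsumΛ.comp_injective
      (i := Set.inclusion (Set.diff_subset : Λ \ {0} ⊆ Λ)) (Set.inclusion_injective _)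
    exact h.congr fun y => rfl
  -- covering
  have hcover : (voronoiCell Λ)ᶜ ⊆ ⋃ (y : ↥(Λ \ {0})),
      {x : EuclideanSpace ℝ (Fin n) | ‖x - (y : EuclideanSpace ℝ (Fin n))‖ < ‖x‖} := by
    intro x hx
    simp only [voronoiCell, Set.mem_compl_iff, Set.mem_setOf_eq] at hx
    push_neg at hx
    obtain ⟨y, hyΛ, hylt⟩ := hx
    have hy0 : y ≠ 0 := by
      rintro rfl
      rw [sub_zero] at hylt
      exact lt_irrefl _ hylt
    exact Set.mem_iUnion.mpr ⟨⟨y, hyΛ, hy0⟩, hylt⟩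
  -- key estimate
  set SS : ℝ := ∑' y : ↥(Λ \ {0}),
      Real.exp (-Real.pi * ‖(y : EuclideanSpace ℝ (Fin n))‖^2 / (2*s)^2) with hSS
  have hSSnn : 0 ≤ SS := tsum_nonneg fun y => (Real.exp_pos _).le
  have key : ∫ x in (voronoiCell Λ)ᶜ, Real.exp (-Real.pi * ‖x‖ ^ 2 / s ^ 2) ≤ s ^ n * SS := by
    rw [integral_eq_lintegral_of_nonneg_ae
      (Filter.Eventually.of_forall fun x => (Real.exp_pos _).le)
      (hfint.aestronglyMeasurable.restrict)]
    apply ENNReal.toReal_le_of_le_ofReal (by positivity)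
    calc ∫⁻ x in (voronoiCell Λ)ᶜ, ENNReal.ofReal (Real.exp (-Real.pi * ‖x‖ ^ 2 / s ^ 2))
        ≤ ∫⁻ x in ⋃ (y : ↥(Λ \ {0})),
            {x : EuclideanSpace ℝ (Fin n) | ‖x - (y : EuclideanSpace ℝ (Fin n))‖ < ‖x‖},
            ENNReal.ofReal (Real.exp (-Real.pi * ‖x‖ ^ 2 / s ^ 2)) :=
          lintegral_mono_set hcover
      _ ≤ ∑' y : ↥(Λ \ {0}), ∫⁻ x in
            {x : EuclideanSpace ℝ (Fin n) | ‖x - (y : EuclideanSpace ℝ (Fin n))‖ < ‖x‖},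
            ENNReal.ofReal (Real.exp (-Real.pi * ‖x‖ ^ 2 / s ^ 2)) :=
          lintegral_iUnion_le _ _
      _ ≤ ∑' y : ↥(Λ \ {0}), ENNReal.ofReal
            (Real.exp (-Real.pi * ‖(y : EuclideanSpace ℝ (Fin n))‖^2 / (2*s)^2) * s ^ n) :=
          ENNReal.tsum_le_tsum fun y => halfspace hs _
      _ = ENNReal.ofReal (∑' y : ↥(Λ \ {0}),
            Real.exp (-Real.pi * ‖(y : EuclideanSpace ℝ (Fin n))‖^2 / (2*s)^2) * s ^ n) :=
          (ENNReal.ofReal_tsum_of_nonneg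
            (fun y => by positivity) (hsum.mul_right _)).symm
      _ = ENNReal.ofReal (s ^ n * SS) := by
          rw [tsum_mul_right, hSS, mul_comm]
  have hVfin : (∫ x in voronoiCell Λ, Real.exp (-Real.pi * ‖x‖ ^ 2 / s ^ 2))
      + ∫ x in (voronoiCell Λ)ᶜ, Real.exp (-Real.pi * ‖x‖ ^ 2 / s ^ 2) = s ^ n := by
    rw [integral_add_compl hV hfint, hI]
  have hrho : rhoSet n (2 * s) (Λ \ {0}) = SS := rfl
  rw [hrho]
  simp only [gaussMeasure]
  have hinv : (s ^ n)⁻¹ * (s ^ n) = 1 := inv_mul_cancel₀ hsn.ne'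
  have h2 : (s ^ n)⁻¹ * (s ^ n * SS) = SS := by
    rw [← mul_assoc, hinv, one_mul]
  nlinarith [mul_le_mul_of_nonneg_left key (inv_nonneg.mpr hsn.le)]
end

section
/- Let Λ ⊆ ℝⁿ be a full-rank lattice and s > 0, and suppose ρ_s(Λ \ {0}) ≤ ε for some 0 < ε < 1. For any r ≥ 1, let t = sqrt(1 + log(r)/log(1/ε)). Then ρ_{s/t}(Λ \ {0}) ≤ (1/r) · ρ_s(Λ \ {0}) ≤ ε/r. -/
open MeasureTheory

lemma summable_int_exp {c : ℝ} (hc : 0 < c) :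
    Summable fun z : ℤ => Real.exp (-c * (z : ℝ) ^ 2) := by
  have hnat : Summable fun n : ℕ => Real.exp (-c * (n : ℝ) ^ 2) := by
    have hgeo : Summable fun n : ℕ => Real.exp (-c) ^ n :=
      summable_geometric_of_lt_one (Real.exp_nonneg _)
        (Real.exp_lt_one_iff.mpr (by linarith))
    refine hgeo.of_nonneg_of_le (fun n => (Real.exp_nonneg _)) fun n => ?_
    rw [← Real.exp_nat_mul]
    apply Real.exp_le_exp.mpr
    have h1 : (n : ℝ) ≤ (n : ℝ) ^ 2 := by
      rcases Nat.eq_zero_or_pos n with h | h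
      · simp [h]
      · have : (1 : ℝ) ≤ (n : ℝ) := Nat.one_le_cast.mpr h
        nlinarith
    nlinarith
  apply Summable.of_nat_of_neg <;> simpa using hnat

lemma summable_pi_int_exp (n : ℕ) {c : ℝ} (hc : 0 < c) :
    Summable fun z : Fin n → ℤ => Real.exp (-c * ∑ i, ((z i : ℝ)) ^ 2) := by
  induction n with
  | zero =>
    exact summable_of_finite_support (Set.Finite.subset (Set.finite_univ) (by simp))
  | succ m ih =>
    have h : Summable fun p : ℤ × (Fin m → ℤ) =>
        Real.exp (-c * (p.1 : ℝ) ^ 2) * Real.exp (-c * ∑ i, ((p.2 i : ℝ)) ^ 2) :=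
      (summable_int_exp hc).mul_of_nonneg ih
        (fun z => Real.exp_nonneg _) (fun z => Real.exp_nonneg _)
    have h2 := ((Fin.consEquiv (fun _ : Fin (m+1) => ℤ)).summable_iff
      (f := fun z : Fin (m+1) → ℤ => Real.exp (-c * ∑ i, ((z i : ℝ)) ^ 2))).mp ?_
    · exact h2
    · refine h.congr fun p => ?_
      simp only [Function.comp, Fin.consEquiv_apply]
      rw [← Real.exp_add, Fin.sum_univ_succ]
      simp only [Fin.cons_zero, Fin.cons_succ]
      ring_nf


lemma summable_rho_aux {n : ℕ} {Λ : Set (EuclideanSpace ℝ (Fin n))} (hΛ : IsLattice Λ)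
    {A : Set (EuclideanSpace ℝ (Fin n))} (hA : A ⊆ Λ) {c : ℝ} (hc : 0 < c) :
    Summable fun x : A => Real.exp (-c * ‖(x : EuclideanSpace ℝ (Fin n))‖ ^ 2) := by
  obtain ⟨b, hb⟩ := hΛ
  let φ : (Fin n → ℤ) → EuclideanSpace ℝ (Fin n) := fun z => ∑ i, (z i : ℝ) • b i
  have hmem : ∀ x : A, ∃ z : Fin n → ℤ, (x : EuclideanSpace ℝ (Fin n)) = φ z := by
    intro x
    have hx := hA x.2
    rw [hb] at hx
    exact hx
  let ι : A → (Fin n → ℤ) := fun x => Classical.choose (hmem x)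
  have hι : ∀ x : A, (x : EuclideanSpace ℝ (Fin n)) = φ (ι x) :=
    fun x => Classical.choose_spec (hmem x)
  have hinj : Function.Injective ι := by
    intro x y hxy
    apply Subtype.ext
    rw [hι x, hι y, hxy]
  let e : EuclideanSpace ℝ (Fin n) ≃L[ℝ] (Fin n → ℝ) := b.equivFun.toContinuousLinearEquiv
  set C : ℝ := ‖(e : EuclideanSpace ℝ (Fin n) →L[ℝ] (Fin n → ℝ))‖ + 1 with hC
  have hC0 : 0 < C := by positivity
  have hnorm : ∀ z : Fin n → ℤ, ∑ i, ((z i : ℝ)) ^ 2 ≤ (n + 1) * C ^ 2 * ‖φ z‖ ^ 2 := by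
    intro z
    have hev : e (φ z) = fun i => (z i : ℝ) := by
      have h1 : φ z = b.equivFun.symm (fun i => (z i : ℝ)) :=
        (b.equivFun_symm_apply _).symm
      have h2 : e (φ z) = b.equivFun (φ z) := rfl
      rw [h2, h1, b.equivFun.apply_symm_apply]
    have hle : ‖e (φ z)‖ ≤ C * ‖φ z‖ := by
      calc ‖e (φ z)‖
          ≤ ‖(e : EuclideanSpace ℝ (Fin n) →L[ℝ] (Fin n → ℝ))‖ * ‖φ z‖ :=
            (e : EuclideanSpace ℝ (Fin n) →L[ℝ] (Fin n → ℝ)).le_opNorm _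
        _ ≤ C * ‖φ z‖ := by
            apply mul_le_mul_of_nonneg_right _ (norm_nonneg _)
            simp [hC]
    have hcoord : ∀ i, |(z i : ℝ)| ≤ ‖e (φ z)‖ := by
      intro i
      calc |(z i : ℝ)| = ‖(e (φ z)) i‖ := by rw [hev]; simp [Real.norm_eq_abs]
        _ ≤ ‖e (φ z)‖ := norm_le_pi_norm _ i
    calc ∑ i, ((z i : ℝ)) ^ 2 ≤ ∑ _i : Fin n, ‖e (φ z)‖ ^ 2 := by
          apply Finset.sum_le_sum
          intro i _
          have := hcoord i
          nlinarith [abs_nonneg ((z i : ℝ)), sq_abs ((z i : ℝ))]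
      _ = n * ‖e (φ z)‖ ^ 2 := by simp [mul_comm]
      _ ≤ (n + 1) * (C * ‖φ z‖) ^ 2 := by
          have h1 : ‖e (φ z)‖ ^ 2 ≤ (C * ‖φ z‖) ^ 2 := by
            nlinarith [norm_nonneg (e (φ z)), norm_nonneg (φ z), hle, hC0]
          nlinarith [sq_nonneg (C * ‖φ z‖), norm_nonneg (e (φ z))]
      _ = (n + 1) * C ^ 2 * ‖φ z‖ ^ 2 := by ring
  set c' : ℝ := c / ((n + 1) * C ^ 2) with hc'
  have hc'0 : 0 < c' := by positivity
  have hg : Summable fun z : Fin n → ℤ => Real.exp (-c * ‖φ z‖ ^ 2) := by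
    refine (summable_pi_int_exp n hc'0).of_nonneg_of_le (fun z => Real.exp_nonneg _)
      fun z => ?_
    apply Real.exp_le_exp.mpr
    have hz := hnorm z
    rw [hc']
    rw [neg_mul, neg_mul, neg_le_neg_iff, div_mul_eq_mul_div, div_le_iff₀ (by positivity)]
    calc c * ∑ i, ((z i : ℝ)) ^ 2 ≤ c * ((n + 1) * C ^ 2 * ‖φ z‖ ^ 2) :=
          mul_le_mul_of_nonneg_left hz hc.le
      _ = c * ‖φ z‖ ^ 2 * ((n + 1) * C ^ 2) := by ring
  refine (hg.comp_injective hinj).congr fun x => ?_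
  simp only [Function.comp]
  rw [← hι x]


lemma summable_rho {n : ℕ} {Λ : Set (EuclideanSpace ℝ (Fin n))} (hΛ : IsLattice Λ)
    {A : Set (EuclideanSpace ℝ (Fin n))} (hA : A ⊆ Λ) {s : ℝ} (hs : 0 < s) :
    Summable fun x : A => Real.exp (-Real.pi * ‖(x : EuclideanSpace ℝ (Fin n))‖ ^ 2 / s ^ 2) := by
  have hc : 0 < Real.pi / s ^ 2 := by positivity
  refine (summable_rho_aux hΛ hA hc).congr fun x => ?_
  congr 1
  ring

theorem rho_small_eps (n : ℕ) (Λ : Set (EuclideanSpace ℝ (Fin n))) (hΛ : IsLattice Λ)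
    (s ε : ℝ) (hs : 0 < s) (hε0 : 0 < ε) (hε1 : ε < 1)
    (hρ : rhoSet n s (Λ \ {0}) ≤ ε) (r : ℝ) (hr : 1 ≤ r) :
    rhoSet n (s / Real.sqrt (1 + Real.log r / Real.log (1 / ε))) (Λ \ {0}) ≤
        (1 / r) * rhoSet n s (Λ \ {0}) ∧
      (1 / r) * rhoSet n s (Λ \ {0}) ≤ ε / r := by
  have hr0 : (0 : ℝ) < r := lt_of_lt_of_le one_pos hr
  have hlogr : 0 ≤ Real.log r := Real.log_nonneg hr
  have hlogε : 0 < Real.log (1 / ε) := Real.log_pos (one_lt_one_div hε0 hε1)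
  set T : ℝ := 1 + Real.log r / Real.log (1 / ε) with hT
  have hT1 : 1 ≤ T := le_add_of_nonneg_right (div_nonneg hlogr hlogε.le)
  have hT0 : 0 < T := lt_of_lt_of_le one_pos hT1
  set s' : ℝ := s / Real.sqrt T with hs'def
  have hs' : 0 < s' := div_pos hs (Real.sqrt_pos.mpr hT0)
  have hs'sq : s' ^ 2 = s ^ 2 / T := by
    rw [hs'def, div_pow, Real.sq_sqrt hT0.le]
  have hsub : Λ \ {0} ⊆ Λ := Set.diff_subset
  have hf : Summable fun x : ↥(Λ \ {0}) =>
      Real.exp (-Real.pi * ‖(x : EuclideanSpace ℝ (Fin n))‖ ^ 2 / s ^ 2) :=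
    summable_rho hΛ hsub hs
  have hg : Summable fun x : ↥(Λ \ {0}) =>
      Real.exp (-Real.pi * ‖(x : EuclideanSpace ℝ (Fin n))‖ ^ 2 / s' ^ 2) :=
    summable_rho hΛ hsub hs'
  have hpoint : ∀ x : ↥(Λ \ {0}),
      Real.exp (-Real.pi * ‖(x : EuclideanSpace ℝ (Fin n))‖ ^ 2 / s' ^ 2) ≤
        (1 / r) * Real.exp (-Real.pi * ‖(x : EuclideanSpace ℝ (Fin n))‖ ^ 2 / s ^ 2) := by
    intro x
    set a : ℝ := Real.pi * ‖(x : EuclideanSpace ℝ (Fin n))‖ ^ 2 / s ^ 2 with ha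
    have ha0 : 0 ≤ a := by positivity
    have hterm : Real.exp (-a) ≤ ε := by
      have h1 : Real.exp (-a) ≤ rhoSet n s (Λ \ {0}) := by
        have := Summable.le_tsum hf x (fun j _ => Real.exp_nonneg _)
        calc Real.exp (-a)
            = Real.exp (-Real.pi * ‖(x : EuclideanSpace ℝ (Fin n))‖ ^ 2 / s ^ 2) := by
              rw [ha]; congr 1; ring
          _ ≤ _ := this
      linarith
    have haε : Real.log (1 / ε) ≤ a := by
      have h2 : -a ≤ Real.log ε := by
        have := Real.log_le_log (Real.exp_pos _) hterm
        rwa [Real.log_exp] at this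
      rw [one_div, Real.log_inv]
      linarith
    have hexp : -Real.pi * ‖(x : EuclideanSpace ℝ (Fin n))‖ ^ 2 / s' ^ 2 = -(a * T) := by
      rw [hs'sq, ha]
      field_simp
    rw [hexp]
    have hsplit : -(a * T) = -a + -(a * (T - 1)) := by ring
    rw [hsplit, Real.exp_add]
    have hb : a * (T - 1) ≥ Real.log r := by
      have : T - 1 = Real.log r / Real.log (1 / ε) := by rw [hT]; ring
      rw [this]
      calc Real.log r = Real.log (1 / ε) * (Real.log r / Real.log (1 / ε)) := by
            field_simp
        _ ≤ a * (Real.log r / Real.log (1 / ε)) :=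
            mul_le_mul_of_nonneg_right haε (div_nonneg hlogr hlogε.le)
    have h3 : Real.exp (-(a * (T - 1))) ≤ 1 / r := by
      calc Real.exp (-(a * (T - 1))) ≤ Real.exp (-(Real.log r)) := by
            apply Real.exp_le_exp.mpr; linarith
        _ = 1 / r := by rw [Real.exp_neg, Real.exp_log hr0, one_div]
    calc Real.exp (-a) * Real.exp (-(a * (T - 1)))
        ≤ Real.exp (-a) * (1 / r) := mul_le_mul_of_nonneg_left h3 (Real.exp_nonneg _)
      _ = (1 / r) * Real.exp (-Real.pi * ‖(x : EuclideanSpace ℝ (Fin n))‖ ^ 2 / s ^ 2) := by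
          rw [mul_comm]; congr 2; rw [ha]; ring
  constructor
  · have := Summable.tsum_le_tsum hpoint hg (hf.mul_left (1 / r))
    calc rhoSet n s' (Λ \ {0})
        = ∑' x : ↥(Λ \ {0}),
            Real.exp (-Real.pi * ‖(x : EuclideanSpace ℝ (Fin n))‖ ^ 2 / s' ^ 2) := rfl
      _ ≤ ∑' x : ↥(Λ \ {0}), (1 / r) *
            Real.exp (-Real.pi * ‖(x : EuclideanSpace ℝ (Fin n))‖ ^ 2 / s ^ 2) := this
      _ = (1 / r) * rhoSet n s (Λ \ {0}) := tsum_mul_left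
  · have h1r : (0 : ℝ) ≤ 1 / r := by positivity
    calc (1 / r) * rhoSet n s (Λ \ {0}) ≤ (1 / r) * ε := mul_le_mul_of_nonneg_left hρ h1r
      _ = ε / r := by rw [one_div, mul_comm, div_eq_mul_inv]
end

section
/- Let n ≥ 1, s > 0, v ∈ ℝⁿ with v ≠ 0, and t > 0. Then s^{-n} · ∫_{{x ∈ ℝⁿ : ⟨x,v⟩ ≥ t‖v‖}} exp(-π‖x‖²/s²) dx ≤ exp(-π t²/s²). In other words, if X is distributed according to the Gaussian density s^{-n}exp(-π‖x‖²/s²) on ℝⁿ, then Pr[⟨X,v⟩ ≥ t‖v‖] ≤ exp(-π(t/s)²). -/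
open MeasureTheory
open scoped RealInnerProductSpace

-- 1D facts
lemma gauss1d_integrable {s : ℝ} (hs : 0 < s) :
    Integrable (fun u : ℝ => Real.exp (-Real.pi * u ^ 2 / s ^ 2)) := by
  have h : ∀ u : ℝ, -Real.pi * u ^ 2 / s ^ 2 = -(Real.pi / s ^ 2) * u ^ 2 := by
    intro u; ring
  simp_rw [h]
  exact integrable_exp_neg_mul_sq (by positivity)

lemma gauss1d_integral {s : ℝ} (hs : 0 < s) :
    ∫ u : ℝ, Real.exp (-Real.pi * u ^ 2 / s ^ 2) = s := by
  have h : ∀ u : ℝ, -Real.pi * u ^ 2 / s ^ 2 = -(Real.pi / s ^ 2) * u ^ 2 := by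
    intro u; ring
  simp_rw [h]
  rw [integral_gaussian]
  have : Real.pi / (Real.pi / s ^ 2) = s ^ 2 := by
    field_simp
  rw [this, Real.sqrt_sq hs.le]

lemma gauss1d_tail {s t : ℝ} (hs : 0 < s) (ht : 0 < t) :
    ∫ u in Set.Ici t, Real.exp (-Real.pi * u ^ 2 / s ^ 2) ≤
      Real.exp (-Real.pi * t ^ 2 / s ^ 2) * s := by
  set g : ℝ → ℝ := fun u => Real.exp (-Real.pi * u ^ 2 / s ^ 2) with hg
  set c : ℝ := Real.exp (-Real.pi * t ^ 2 / s ^ 2) with hc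
  have hgi : Integrable g := gauss1d_integrable hs
  have step1 : ∫ u in Set.Ici t, g u ≤ ∫ u in Set.Ici t, c * g (u - t) := by
    apply setIntegral_mono_on hgi.integrableOn
      (((hgi.comp_sub_right t).const_mul c).integrableOn) measurableSet_Ici
    intro u hu
    simp only [Set.mem_Ici] at hu
    rw [hg, hc, ← Real.exp_add]
    apply Real.exp_le_exp.2
    have hs2 : (0:ℝ) < s ^ 2 := by positivity
    rw [← add_div, div_le_div_iff_of_pos_right hs2]
    nlinarith [Real.pi_pos, mul_nonneg ht.le (sub_nonneg.2 hu)]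
  have step2 : ∫ u in Set.Ici t, g (u - t) = ∫ w in Set.Ici (0:ℝ), g w := by
    have hmp : MeasurePreserving (fun w : ℝ => w + t) volume volume :=
      measurePreserving_add_right volume t
    have := hmp.setIntegral_preimage_emb (measurableEmbedding_addRight t)
      (fun u => g (u - t)) (Set.Ici t)
    rw [← this]
    have hpre : (fun w : ℝ => w + t) ⁻¹' Set.Ici t = Set.Ici (0:ℝ) := by
      ext w; simp [le_add_iff_nonneg_left]
    rw [hpre]
    simp
  have step3 : ∫ w in Set.Ici (0:ℝ), g w ≤ ∫ w : ℝ, g w :=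
    setIntegral_le_integral hgi (Filter.Eventually.of_forall fun w => (Real.exp_pos _).le)
  calc ∫ u in Set.Ici t, g u ≤ ∫ u in Set.Ici t, c * g (u - t) := step1
    _ = c * ∫ u in Set.Ici t, g (u - t) := by rw [integral_const_mul]
    _ = c * ∫ w in Set.Ici (0:ℝ), g w := by rw [step2]
    _ ≤ c * ∫ w : ℝ, g w := by
        apply mul_le_mul_of_nonneg_left step3 (Real.exp_pos _).le
    _ = c * s := by rw [gauss1d_integral hs]

theorem gaussian_linear_tail (n : ℕ) (hn : 1 ≤ n) (s : ℝ) (hs : 0 < s)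
    (v : EuclideanSpace ℝ (Fin n)) (hv : v ≠ 0) (t : ℝ) (ht : 0 < t) :
    (s ^ n)⁻¹ *
        ∫ x in {x : EuclideanSpace ℝ (Fin n) | ⟪x, v⟫ ≥ t * ‖v‖},
          Real.exp (-Real.pi * ‖x‖ ^ 2 / s ^ 2) ≤
      Real.exp (-Real.pi * t ^ 2 / s ^ 2) := by
  obtain ⟨m, rfl⟩ : ∃ m, n = m + 1 := ⟨n - 1, (Nat.succ_pred_eq_of_pos hn).symm⟩
  have hvn : (0:ℝ) < ‖v‖ := norm_pos_iff.2 hv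
  set u : EuclideanSpace ℝ (Fin (m+1)) := ‖v‖⁻¹ • v with hu
  have hun : ‖u‖ = 1 := by
    rw [hu, norm_smul, norm_inv, norm_norm, inv_mul_cancel₀ hvn.ne']
  -- orthonormal basis with b 0 = u
  have horth : Orthonormal ℝ (({0} : Set (Fin (m+1))).restrict (fun _ => u)) := by
    constructor
    · intro i; exact hun
    · intro i j hij
      exfalso
      apply hij
      have hi := i.2; have hj := j.2
      simp only [Set.mem_singleton_iff] at hi hj
      exact Subtype.ext (hi.trans hj.symm)
  obtain ⟨b, hb0⟩ := horth.exists_orthonormalBasis_extension_of_card_eq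
    (by simp [finrank_euclideanSpace])
  have hb0' : b 0 = u := hb0 0 rfl
  -- the set
  have hset : {x : EuclideanSpace ℝ (Fin (m+1)) | ⟪x, v⟫ ≥ t * ‖v‖}
      = b.repr ⁻¹' {y : EuclideanSpace ℝ (Fin (m+1)) | t ≤ y 0} := by
    ext x
    simp only [Set.mem_setOf_eq, Set.mem_preimage, ge_iff_le]
    have hxv : ⟪x, v⟫ = ‖v‖ * ⟪x, u⟫ := by
      conv_lhs => rw [show v = ‖v‖ • u by rw [hu, smul_inv_smul₀ hvn.ne']]
      rw [real_inner_smul_right]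
    have hxu : ⟪x, u⟫ = b.repr x 0 := by
      rw [← hb0', b.repr_apply_apply, real_inner_comm]
    rw [hxv, hxu, mul_comm t ‖v‖, mul_le_mul_iff_right₀ hvn]
  rw [hset]
  -- move to EuclideanSpace coordinates
  have h1 := b.measurePreserving_repr.setIntegral_preimage_emb
    b.repr.toHomeomorph.measurableEmbedding
    (fun y => Real.exp (-Real.pi * ‖y‖ ^ 2 / s ^ 2))
    {y : EuclideanSpace ℝ (Fin (m+1)) | t ≤ y 0}
  simp only [LinearIsometryEquiv.coe_toHomeomorph, LinearIsometryEquiv.norm_map] at h1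
  rw [h1]
  -- move to pi space
  have hmp := EuclideanSpace.volume_preserving_symm_measurableEquiv_toLp (Fin (m+1))
  have h2 := hmp.setIntegral_preimage_emb (MeasurableEquiv.measurableEmbedding _)
    (fun z : Fin (m+1) → ℝ => Real.exp (-Real.pi * (∑ i, (z i) ^ 2) / s ^ 2))
    {z : Fin (m+1) → ℝ | t ≤ z 0}
  have hnorm : ∀ y : EuclideanSpace ℝ (Fin (m+1)),
      ∑ i, ((MeasurableEquiv.toLp 2 (Fin (m+1) → ℝ)).symm y i) ^ 2 = ‖y‖ ^ 2 := by
    intro y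
    rw [EuclideanSpace.norm_eq, Real.sq_sqrt (by positivity)]
    simp [sq_abs]
  have hpre : (⇑(MeasurableEquiv.toLp 2 (Fin (m+1) → ℝ)).symm) ⁻¹' {z | t ≤ z 0}
      = {y : EuclideanSpace ℝ (Fin (m+1)) | t ≤ y 0} := rfl
  simp only [hnorm, hpre] at h2
  rw [h2]
  -- factor the integrand over coordinates
  set g : ℝ → ℝ := fun w => Real.exp (-Real.pi * w ^ 2 / s ^ 2) with hgdef
  set F : Fin (m+1) → ℝ → ℝ :=
    fun i => if i = 0 then Set.indicator (Set.Ici t) g else g with hF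
  have hS : MeasurableSet {z : Fin (m+1) → ℝ | t ≤ z 0} :=
    (measurable_pi_apply 0) measurableSet_Ici
  have key : ∫ z in {z : Fin (m+1) → ℝ | t ≤ z 0},
      Real.exp ((-Real.pi * ∑ i, (z i) ^ 2) / s ^ 2)
      = (∫ w in Set.Ici t, g w) * s ^ m := by
    rw [← integral_indicator hS]
    have hind : ∀ z : Fin (m+1) → ℝ,
        Set.indicator {z : Fin (m+1) → ℝ | t ≤ z 0}
          (fun z => Real.exp ((-Real.pi * ∑ i, (z i) ^ 2) / s ^ 2)) z
        = ∏ i, F i (z i) := by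
      intro z
      have hprod : Real.exp ((-Real.pi * ∑ i, (z i) ^ 2) / s ^ 2) = ∏ i, g (z i) := by
        have : (-Real.pi * ∑ i, (z i) ^ 2) / s ^ 2
            = ∑ i, (-Real.pi * (z i) ^ 2 / s ^ 2) := by
          rw [Finset.mul_sum, Finset.sum_div]
        rw [this, Real.exp_sum]
      by_cases hz : z ∈ {z : Fin (m+1) → ℝ | t ≤ z 0}
      · rw [Set.indicator_of_mem hz, hprod]
        refine Finset.prod_congr rfl fun i _ => ?_
        by_cases hi : i = 0
        · subst hi
          have hz0 : z 0 ∈ Set.Ici t := hz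
          simp [hF, Set.indicator_of_mem hz0]
        · simp [hF, hi]
      · rw [Set.indicator_of_notMem hz]
        symm
        apply Finset.prod_eq_zero (Finset.mem_univ (0 : Fin (m+1)))
        have hz0 : z 0 ∉ Set.Ici t := hz
        simp [hF, Set.indicator_of_notMem hz0]
    simp_rw [hind]
    rw [MeasureTheory.integral_fintype_prod_volume_eq_prod (f := F)]
    rw [Fin.prod_univ_succ]
    have h0 : ∫ w, F 0 w = ∫ w in Set.Ici t, g w := by
      rw [hF]; simp only [if_pos rfl]
      exact integral_indicator measurableSet_Ici
    have hsucc : ∀ i : Fin m, ∫ w, F i.succ w = s := by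
      intro i
      rw [hF]
      simp only [if_neg (Fin.succ_ne_zero i)]
      exact gauss1d_integral hs
    rw [h0]
    congr 1
    simp_rw [hsucc]
    rw [Finset.prod_const, Finset.card_univ, Fintype.card_fin]
  rw [key]
  have htail : ∫ w in Set.Ici t, g w ≤ Real.exp (-Real.pi * t ^ 2 / s ^ 2) * s :=
    gauss1d_tail hs ht
  have harith : (s ^ (m+1) : ℝ)⁻¹ * ((∫ w in Set.Ici t, g w) * s ^ m)
      = (∫ w in Set.Ici t, g w) / s := by
    rw [pow_succ]
    field_simp
  rw [harith, div_le_iff₀ hs]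
  exact htail
end

section
/- Let n ≥ 1, s > 0, and ε > 0. Then s^{-n} · ∫_{{x ∈ ℝⁿ : ‖x‖² ≥ (1+ε)·s²·n/(2π)}} exp(-π‖x‖²/s²) dx ≤ ((1+ε)·e^{-ε})^{n/2}. In other words, if X is distributed according to the Gaussian density s^{-n}exp(-π‖x‖²/s²) on ℝⁿ, then Pr[‖X‖² ≥ (1+ε)s²n/(2π)] ≤ ((1+ε)e^{-ε})^{n/2}. -/
open MeasureTheory

theorem gaussian_norm_tail (n : ℕ) (hn : 1 ≤ n) (s : ℝ) (hs : 0 < s) (ε : ℝ) (hε : 0 < ε) :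
    (s ^ n)⁻¹ *
        ∫ x in {x : EuclideanSpace ℝ (Fin n) |
            ‖x‖ ^ 2 ≥ (1 + ε) * s ^ 2 * n / (2 * Real.pi)},
          Real.exp (-Real.pi * ‖x‖ ^ 2 / s ^ 2) ≤
      ((1 + ε) * Real.exp (-ε)) ^ ((n : ℝ) / 2) := by
  have hπ := Real.pi_pos
  have h1ε : (0:ℝ) < 1 + ε := by linarith
  set R : ℝ := (1 + ε) * s ^ 2 * n / (2 * Real.pi) with hR
  set b : ℝ := Real.pi / ((1 + ε) * s ^ 2) with hb
  have hbpos : 0 < b := by positivity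
  have hb'pos : (0:ℝ) < Real.pi / s ^ 2 := by positivity
  set A : Set (EuclideanSpace ℝ (Fin n)) := {x | ‖x‖ ^ 2 ≥ R} with hA
  have hAmeas : MeasurableSet A :=
    measurableSet_le measurable_const (measurable_norm.pow_const 2)
  set C : ℝ := Real.exp (-(ε * n / 2)) with hC
  -- integrability of gaussians
  have hint : ∀ c : ℝ, 0 < c →
      Integrable (fun x : EuclideanSpace ℝ (Fin n) => Real.exp (-c * ‖x‖ ^ 2)) := by
    intro c hc
    have hcc : (0:ℝ) < (c : ℂ).re := by simpa using hc
    have h := (GaussianFourier.integrable_cexp_neg_mul_sq_norm_add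
      (V := EuclideanSpace ℝ (Fin n)) hcc 0 0).norm
    simpa [Complex.norm_exp, Complex.add_re, Complex.mul_re, Complex.neg_re,
      Complex.ofReal_re, Complex.ofReal_im, ← Complex.ofReal_pow] using h
  have hf_int : Integrable (fun x : EuclideanSpace ℝ (Fin n) =>
      Real.exp (-Real.pi * ‖x‖ ^ 2 / s ^ 2)) := by
    have := hint (Real.pi / s ^ 2) hb'pos
    convert this using 2 with x
    · rfl
    ring_nf
  have hg_int : Integrable (fun x : EuclideanSpace ℝ (Fin n) =>
      C * Real.exp (-b * ‖x‖ ^ 2)) := (hint b hbpos).const_mul C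
  -- pointwise bound on A
  have key : ∀ x ∈ A, Real.exp (-Real.pi * ‖x‖ ^ 2 / s ^ 2) ≤ C * Real.exp (-b * ‖x‖ ^ 2) := by
    intro x hx
    rw [hC, ← Real.exp_add]
    apply Real.exp_le_exp.2
    have hx' : R ≤ ‖x‖ ^ 2 := hx
    have hcoe : Real.pi / s ^ 2 - b = Real.pi * ε / (s ^ 2 * (1 + ε)) := by
      rw [hb]; field_simp; ring
    have hcoe_pos : (0:ℝ) < Real.pi / s ^ 2 - b := by rw [hcoe]; positivity
    have h2 : (Real.pi / s ^ 2 - b) * R = ε * n / 2 := by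
      rw [hcoe, hR]; field_simp
    have h3 : ε * n / 2 ≤ Real.pi / s ^ 2 * ‖x‖ ^ 2 - b * ‖x‖ ^ 2 := by
      nlinarith [mul_le_mul_of_nonneg_left hx' hcoe_pos.le]
    have h4 : -Real.pi * ‖x‖ ^ 2 / s ^ 2 = -(Real.pi / s ^ 2 * ‖x‖ ^ 2) := by ring
    linarith
  -- chain of inequalities
  have step1 : (∫ x in A, Real.exp (-Real.pi * ‖x‖ ^ 2 / s ^ 2)) ≤
      ∫ x in A, C * Real.exp (-b * ‖x‖ ^ 2) :=
    setIntegral_mono_on hf_int.integrableOn hg_int.integrableOn hAmeas key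
  have step2 : (∫ x in A, C * Real.exp (-b * ‖x‖ ^ 2)) ≤
      ∫ x : EuclideanSpace ℝ (Fin n), C * Real.exp (-b * ‖x‖ ^ 2) := by
    apply setIntegral_le_integral hg_int
    filter_upwards with x
    positivity
  have step3 : (∫ x : EuclideanSpace ℝ (Fin n), C * Real.exp (-b * ‖x‖ ^ 2)) =
      C * ((1 + ε) * s ^ 2) ^ ((n : ℝ) / 2) := by
    rw [integral_const_mul, GaussianFourier.integral_rexp_neg_mul_sq_norm hbpos]
    congr 2
    · rw [hb]; field_simp
    · simp
  have hfinal : (s ^ n)⁻¹ * (C * ((1 + ε) * s ^ 2) ^ ((n : ℝ) / 2)) =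
      ((1 + ε) * Real.exp (-ε)) ^ ((n : ℝ) / 2) := by
    rw [Real.mul_rpow h1ε.le (by positivity), Real.mul_rpow h1ε.le (by positivity)]
    have h2n : ((s ^ 2 : ℝ)) ^ ((n : ℝ) / 2) = s ^ n := by
      rw [← Real.rpow_natCast s 2, ← Real.rpow_mul hs.le,
        show ((2:ℕ):ℝ) * ((n:ℝ) / 2) = (n:ℝ) by push_cast; ring, Real.rpow_natCast]
    have hexp : Real.exp (-ε) ^ ((n : ℝ) / 2) = C := by
      rw [hC, ← Real.exp_mul]; ring_nf
    rw [h2n, hexp]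
    have hsn : (s : ℝ) ^ n ≠ 0 := by positivity
    field_simp
  calc (s ^ n)⁻¹ * ∫ x in A, Real.exp (-Real.pi * ‖x‖ ^ 2 / s ^ 2)
      ≤ (s ^ n)⁻¹ * ∫ x in A, C * Real.exp (-b * ‖x‖ ^ 2) := by
        apply mul_le_mul_of_nonneg_left step1 (by positivity)
    _ ≤ (s ^ n)⁻¹ * ∫ x : EuclideanSpace ℝ (Fin n), C * Real.exp (-b * ‖x‖ ^ 2) := by
        apply mul_le_mul_of_nonneg_left step2 (by positivity)
    _ = ((1 + ε) * Real.exp (-ε)) ^ ((n : ℝ) / 2) := by rw [step3, hfinal]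
end

section
/- Let n ≥ 1, r > 0, and set s = r·sqrt(2π/n). Then for every y ∈ ℝⁿ, vol(rB ∩ (y + rB)) / vol(rB) ≤ 2·exp(-π‖y‖²/(4s²)), where rB denotes the closed Euclidean ball of radius r centered at the origin in ℝⁿ and vol denotes Lebesgue measure. -/
open MeasureTheory

theorem ball_intersection_volume (n : ℕ) (hn : 1 ≤ n) (r : ℝ) (hr : 0 < r)
    (s : ℝ) (hsdef : s = r * Real.sqrt (2 * Real.pi / n))
    (y : EuclideanSpace ℝ (Fin n)) :
    (volume (Metric.closedBall (0 : EuclideanSpace ℝ (Fin n)) r ∩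
        Metric.closedBall y r)).toReal /
      (volume (Metric.closedBall (0 : EuclideanSpace ℝ (Fin n)) r)).toReal ≤
    2 * Real.exp (-Real.pi * ‖y‖ ^ 2 / (4 * s ^ 2)) := by
  have hn0 : (n : ℝ) ≠ 0 := by positivity
  have hnpos : (0:ℝ) < n := by positivity
  -- rewrite the exponent
  have hs2 : s ^ 2 = r ^ 2 * (2 * Real.pi / n) := by
    rw [hsdef, mul_pow, Real.sq_sqrt (by positivity)]
  have hE : -Real.pi * ‖y‖ ^ 2 / (4 * s ^ 2) = -(n : ℝ) * ‖y‖ ^ 2 / (8 * r ^ 2) := by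
    rw [hs2]
    field_simp
    ring
  rw [hE]
  set A : ℝ := Real.sqrt (r ^ 2 - ‖y‖ ^ 2 / 4) with hA
  -- lens containment
  have hsub : Metric.closedBall (0 : EuclideanSpace ℝ (Fin n)) r ∩ Metric.closedBall y r
      ⊆ Metric.closedBall ((2:ℝ)⁻¹ • y) A := by
    rintro x ⟨hx1, hx2⟩
    rw [Metric.mem_closedBall, dist_zero_right] at hx1
    rw [Metric.mem_closedBall, dist_eq_norm] at hx2
    rw [Metric.mem_closedBall, dist_eq_norm]
    have hid : x - (2:ℝ)⁻¹ • y + (2:ℝ)⁻¹ • y = x := by abel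
    have hid2 : x - (2:ℝ)⁻¹ • y - (2:ℝ)⁻¹ • y = x - y := by
      rw [sub_sub, ← two_smul ℝ ((2:ℝ)⁻¹ • y), smul_smul]
      norm_num
    have hp := parallelogram_law_with_norm ℝ (x - (2:ℝ)⁻¹ • y) ((2:ℝ)⁻¹ • y)
    rw [hid, hid2] at hp
    have hny : ‖(2:ℝ)⁻¹ • y‖ = ‖y‖ / 2 := by
      rw [norm_smul]; simp [abs_of_pos]; ring
    rw [hny] at hp
    have hsq : ‖x - (2:ℝ)⁻¹ • y‖ ^ 2 ≤ r ^ 2 - ‖y‖ ^ 2 / 4 := by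
      nlinarith [mul_self_le_mul_self (norm_nonneg x) hx1,
        mul_self_le_mul_self (norm_nonneg (x - y)) hx2, hp]
    calc ‖x - (2:ℝ)⁻¹ • y‖ = Real.sqrt (‖x - (2:ℝ)⁻¹ • y‖ ^ 2) := by
            rw [Real.sqrt_sq (norm_nonneg _)]
      _ ≤ A := Real.sqrt_le_sqrt hsq
  -- volumes
  have hdim : Module.finrank ℝ (EuclideanSpace ℝ (Fin n)) = n := finrank_euclideanSpace_fin
  set v1 : ENNReal := volume (Metric.ball (0 : EuclideanSpace ℝ (Fin n)) 1) with hv1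
  have h1 : volume (Metric.closedBall ((2:ℝ)⁻¹ • y) A) = ENNReal.ofReal (A ^ n) * v1 := by
    rw [Measure.addHaar_closedBall _ _ (Real.sqrt_nonneg _), hdim]
  have h2 : volume (Metric.closedBall (0 : EuclideanSpace ℝ (Fin n)) r)
      = ENNReal.ofReal (r ^ n) * v1 := by
    rw [Measure.addHaar_closedBall _ _ hr.le, hdim]
  have hv1pos : 0 < v1 := Metric.measure_ball_pos volume _ (by norm_num : (0:ℝ) < 1)
  have hv1fin : v1 ≠ ⊤ := measure_ball_lt_top.ne
  have hApos : 0 ≤ A := Real.sqrt_nonneg _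
  have hmono : (volume (Metric.closedBall (0 : EuclideanSpace ℝ (Fin n)) r ∩
      Metric.closedBall y r)).toReal ≤ A ^ n * v1.toReal := by
    rw [← ENNReal.toReal_ofReal (by positivity : (0:ℝ) ≤ A ^ n),
      ← ENNReal.toReal_mul, ← h1]
    apply ENNReal.toReal_mono
    · rw [h1]; exact ENNReal.mul_ne_top ENNReal.ofReal_ne_top hv1fin
    · exact measure_mono hsub
  have h2' : (volume (Metric.closedBall (0 : EuclideanSpace ℝ (Fin n)) r)).toReal
      = r ^ n * v1.toReal := by
    rw [h2, ENNReal.toReal_mul, ENNReal.toReal_ofReal (by positivity)]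
  have hv1tr : 0 < v1.toReal := ENNReal.toReal_pos hv1pos.ne' hv1fin
  have hden : 0 < r ^ n * v1.toReal := by positivity
  calc (volume (Metric.closedBall (0 : EuclideanSpace ℝ (Fin n)) r ∩
        Metric.closedBall y r)).toReal /
      (volume (Metric.closedBall (0 : EuclideanSpace ℝ (Fin n)) r)).toReal
      ≤ (A ^ n * v1.toReal) / (r ^ n * v1.toReal) := by
        rw [h2']
        exact div_le_div_of_nonneg_right hmono hden.le
    _ = A ^ n / r ^ n := mul_div_mul_right _ _ hv1tr.ne'
    _ ≤ 2 * Real.exp (-(n : ℝ) * ‖y‖ ^ 2 / (8 * r ^ 2)) := by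
        rw [div_le_iff₀ (by positivity : (0:ℝ) < r ^ n)]
        have hAle : A ≤ r * Real.exp (-(‖y‖ ^ 2 / (8 * r ^ 2))) := by
          have h1t : r ^ 2 - ‖y‖ ^ 2 / 4 ≤ r ^ 2 * Real.exp (-(‖y‖ ^ 2 / (4 * r ^ 2))) := by
            have h0 := mul_le_mul_of_nonneg_left
              (Real.add_one_le_exp (-(‖y‖ ^ 2 / (4 * r ^ 2)))) (sq_nonneg r)
            have hkey : r ^ 2 * (-(‖y‖ ^ 2 / (4 * r ^ 2)) + 1) = r ^ 2 - ‖y‖ ^ 2 / 4 := by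
              field_simp; ring
            linarith
          calc A ≤ Real.sqrt (r ^ 2 * Real.exp (-(‖y‖ ^ 2 / (4 * r ^ 2)))) :=
                Real.sqrt_le_sqrt h1t
            _ = r * Real.exp (-(‖y‖ ^ 2 / (8 * r ^ 2))) := by
                rw [Real.sqrt_mul (by positivity), Real.sqrt_sq hr.le,
                  ← Real.exp_half]
                congr 1
                ring
        have hpow : A ^ n ≤ (r * Real.exp (-(‖y‖ ^ 2 / (8 * r ^ 2)))) ^ n :=
          pow_le_pow_left₀ hApos hAle n
        have hexp : (Real.exp (-(‖y‖ ^ 2 / (8 * r ^ 2)))) ^ n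
            = Real.exp (-(n : ℝ) * ‖y‖ ^ 2 / (8 * r ^ 2)) := by
          rw [← Real.exp_nat_mul]
          congr 1
          ring
        calc A ^ n ≤ (r * Real.exp (-(‖y‖ ^ 2 / (8 * r ^ 2)))) ^ n := hpow
          _ = Real.exp (-(n : ℝ) * ‖y‖ ^ 2 / (8 * r ^ 2)) * r ^ n := by
              rw [mul_pow, hexp]; ring
          _ ≤ 2 * Real.exp (-(n : ℝ) * ‖y‖ ^ 2 / (8 * r ^ 2)) * r ^ n := by
              nlinarith [Real.exp_pos (-(n : ℝ) * ‖y‖ ^ 2 / (8 * r ^ 2)),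
                pow_pos hr n]
end

section
/- Let K ⊆ ℝⁿ be a convex set containing the origin, and let r, s > 0. Then γ_s(rB \ K) / γ_s(rB) ≤ vol(rB \ K) / vol(rB); equivalently, γ_s(rB \ K) · vol(rB) ≤ vol(rB \ K) · γ_s(rB). That is, the Gaussian measure restricted to the ball rB assigns no more relative mass to the complement of K than the uniform measure on rB does. -/
open MeasureTheory Pointwise

/-- Key star-shapedness inclusion: for `0 ≤ ρ ≤ r`, the part of the ball of radius `ρ`
outside a convex set `K` containing `0` is contained in the rescaling of the corresponding
set for radius `r`. -/
lemma closedBall_diff_subset_smul {n : ℕ} {K : Set (EuclideanSpace ℝ (Fin n))}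
    (hK : Convex ℝ K) (h0 : (0 : EuclideanSpace ℝ (Fin n)) ∈ K) {ρ r : ℝ}
    (hρ : 0 ≤ ρ) (hρr : ρ ≤ r) (hr : 0 < r) :
    Metric.closedBall 0 ρ \ K ⊆
      (ρ / r) • (Metric.closedBall (0 : EuclideanSpace ℝ (Fin n)) r \ K) := by
  rintro x ⟨hx, hxK⟩
  rw [Metric.mem_closedBall, dist_zero_right] at hx
  rcases eq_or_lt_of_le hρ with h0ρ | h0ρ
  · have hx0 : x = 0 := norm_le_zero_iff.mp (h0ρ ▸ hx)
    exact absurd (hx0 ▸ h0) hxK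
  · have hc0 : 0 < ρ / r := div_pos h0ρ hr
    have hc1 : ρ / r ≤ 1 := (div_le_one hr).mpr hρr
    refine Set.mem_smul_set.mpr ⟨(ρ / r)⁻¹ • x, ⟨?_, ?_⟩, smul_inv_smul₀ hc0.ne' x⟩
    · rw [Metric.mem_closedBall, dist_zero_right, norm_smul, norm_inv, Real.norm_eq_abs,
        abs_of_pos hc0]
      calc (ρ / r)⁻¹ * ‖x‖ ≤ (ρ / r)⁻¹ * ρ := by gcongr
        _ = r := by field_simp
    · intro hmem
      have hmem' : (ρ / r) • ((ρ / r)⁻¹ • x) + (1 - ρ / r) • (0 : EuclideanSpace ℝ (Fin n)) ∈ K :=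
        hK hmem h0 hc0.le (by linarith) (by ring)
      rw [smul_inv_smul₀ hc0.ne', smul_zero, add_zero] at hmem'
      exact hxK hmem'

theorem gaussian_uniform_transfer (n : ℕ) (K : Set (EuclideanSpace ℝ (Fin n)))
    (hK : Convex ℝ K) (h0 : (0 : EuclideanSpace ℝ (Fin n)) ∈ K)
    (r s : ℝ) (hr : 0 < r) (hs : 0 < s) :
    gaussMeasure n s (Metric.closedBall 0 r \ K) /
        gaussMeasure n s (Metric.closedBall (0 : EuclideanSpace ℝ (Fin n)) r) ≤
      (volume (Metric.closedBall (0 : EuclideanSpace ℝ (Fin n)) r \ K)).toReal /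
        (volume (Metric.closedBall (0 : EuclideanSpace ℝ (Fin n)) r)).toReal := by
  set f : EuclideanSpace ℝ (Fin n) → ℝ := fun x => Real.exp (-Real.pi * ‖x‖ ^ 2 / s ^ 2) with hf_def
  set B : Set (EuclideanSpace ℝ (Fin n)) := Metric.closedBall 0 r with hB_def
  set A : Set (EuclideanSpace ℝ (Fin n)) := B \ K with hA_def
  have hf_cont : Continuous f := by
    apply Real.continuous_exp.comp
    fun_prop
  have hf_pos : ∀ x, 0 < f x := fun x => Real.exp_pos _
  have hs2 : (0 : ℝ) < s ^ 2 := by positivity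
  -- description of superlevel sets
  have hlevel : ∀ t : ℝ, 0 < t →
      {x : EuclideanSpace ℝ (Fin n) | t ≤ f x} ∩ B = (if 1 < t then (∅ : Set (EuclideanSpace ℝ (Fin n)))
        else Metric.closedBall 0 (Real.sqrt (s ^ 2 * (-Real.log t) / Real.pi)) ∩ B) := by
    intro t ht
    split_ifs with h1t
    · ext x
      simp only [Set.mem_inter_iff, Set.mem_setOf_eq, Set.mem_empty_iff_false, iff_false,
        not_and]
      intro hx
      have : f x ≤ 1 := by
        rw [hf_def]
        apply Real.exp_le_one_iff.mpr
        have := sq_nonneg ‖x‖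
        have := Real.pi_pos
        rw [div_nonpos_iff]
        right
        constructor
        · nlinarith
        · positivity
      linarith
    · push_neg at h1t
      have hlog : Real.log t ≤ 0 := Real.log_nonpos ht.le h1t
      have hy : 0 ≤ s ^ 2 * (-Real.log t) / Real.pi :=
        div_nonneg (mul_nonneg (sq_nonneg s) (by linarith)) Real.pi_pos.le
      ext x
      simp only [Set.mem_inter_iff, Set.mem_setOf_eq, Metric.mem_closedBall, dist_zero_right]
      constructor
      · rintro ⟨hx, hxB⟩
        refine ⟨?_, hxB⟩
        rw [Real.le_sqrt (norm_nonneg x) hy]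
        have h1 : Real.log t ≤ -Real.pi * ‖x‖ ^ 2 / s ^ 2 :=
          (Real.log_le_iff_le_exp ht).mpr hx
        rw [le_div_iff₀ hs2] at h1
        rw [le_div_iff₀ Real.pi_pos]
        nlinarith [Real.pi_pos]
      · rintro ⟨hx, hxB⟩
        refine ⟨?_, hxB⟩
        rw [Real.le_sqrt (norm_nonneg x) hy] at hx
        rw [le_div_iff₀ Real.pi_pos] at hx
        rw [← Real.log_le_iff_le_exp ht, le_div_iff₀ hs2]
        nlinarith [Real.pi_pos]
  -- finiteness
  have hB_fin : volume B ≠ ⊤ := (MeasureTheory.measure_closedBall_lt_top).ne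
  have hA_fin : volume A ≠ ⊤ := ((measure_mono Set.diff_subset).trans_lt
    (lt_top_iff_ne_top.mpr hB_fin)).ne
  -- the pointwise layer-cake comparison
  have pointwise : ∀ t : ℝ, 0 < t →
      volume ({x : EuclideanSpace ℝ (Fin n) | t ≤ f x} ∩ A) * volume B ≤
        volume ({x : EuclideanSpace ℝ (Fin n) | t ≤ f x} ∩ B) * volume A := by
    intro t ht
    have hAB : {x : EuclideanSpace ℝ (Fin n) | t ≤ f x} ∩ A = ({x : EuclideanSpace ℝ (Fin n) | t ≤ f x} ∩ B) ∩ A := by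
      rw [Set.inter_assoc, hA_def, Set.inter_eq_right.mpr Set.diff_subset]
    by_cases h1t : 1 < t
    · have : {x : EuclideanSpace ℝ (Fin n) | t ≤ f x} ∩ B = (∅ : Set (EuclideanSpace ℝ (Fin n))) := by rw [hlevel t ht]; simp [h1t]
      rw [hAB, this]
      simp
    · have hlev : {x : EuclideanSpace ℝ (Fin n) | t ≤ f x} ∩ B
          = Metric.closedBall 0 (Real.sqrt (s ^ 2 * (-Real.log t) / Real.pi)) ∩ B := by
        rw [hlevel t ht]; simp [h1t]
      set ρ : ℝ := Real.sqrt (s ^ 2 * (-Real.log t) / Real.pi) with hρ_def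
      have hρ0 : 0 ≤ ρ := Real.sqrt_nonneg _
      by_cases hρr : ρ ≤ r
      · -- small radius case
        have hsub : Metric.closedBall (0 : EuclideanSpace ℝ (Fin n)) 0 ⊆ B := by
          exact Metric.closedBall_subset_closedBall (by linarith)
        have hball_sub : Metric.closedBall (0 : EuclideanSpace ℝ (Fin n)) ρ ⊆ B :=
          Metric.closedBall_subset_closedBall hρr
        have hlevB : {x : EuclideanSpace ℝ (Fin n) | t ≤ f x} ∩ B = Metric.closedBall (0 : EuclideanSpace ℝ (Fin n)) ρ := by
          rw [hlev, Set.inter_eq_left.mpr hball_sub]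
        have hLHS : {x : EuclideanSpace ℝ (Fin n) | t ≤ f x} ∩ A ⊆ (ρ / r) • (B \ K) := by
          rw [hAB, hlevB]
          intro x hx
          exact closedBall_diff_subset_smul hK h0 hρ0 hρr hr ⟨hx.1, hx.2.2⟩
        have hsmul : volume ((ρ / r) • (B \ K))
            = ENNReal.ofReal |(ρ / r) ^ Module.finrank ℝ (EuclideanSpace ℝ (Fin n))| * volume (B \ K) :=
          Measure.addHaar_smul volume _ _
        have hballvol : volume (Metric.closedBall (0 : EuclideanSpace ℝ (Fin n)) ρ)
            = ENNReal.ofReal |(ρ / r) ^ Module.finrank ℝ (EuclideanSpace ℝ (Fin n))| * volume B := by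
          have : (ρ / r) • (Metric.closedBall (0 : EuclideanSpace ℝ (Fin n)) r) = Metric.closedBall (0 : EuclideanSpace ℝ (Fin n)) ρ := by
            rw [smul_closedBall _ _ hr.le, smul_zero, Real.norm_eq_abs,
              abs_of_nonneg (div_nonneg hρ0 hr.le), div_mul_cancel₀ _ hr.ne']
          rw [← this, Measure.addHaar_smul]
        calc volume ({x : EuclideanSpace ℝ (Fin n) | t ≤ f x} ∩ A) * volume B
            ≤ volume ((ρ / r) • (B \ K)) * volume B :=
              mul_le_mul_left (measure_mono hLHS) _
          _ = (ENNReal.ofReal |(ρ / r) ^ Module.finrank ℝ (EuclideanSpace ℝ (Fin n))| * volume B) * volume (B \ K) := by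
              rw [hsmul]; ring
          _ = volume ({x : EuclideanSpace ℝ (Fin n) | t ≤ f x} ∩ B) * volume A := by
              rw [hlevB, hballvol, hA_def]
      · -- large radius case: the level set contains all of B
        push_neg at hρr
        have hBsub : B ⊆ Metric.closedBall (0 : EuclideanSpace ℝ (Fin n)) ρ :=
          Metric.closedBall_subset_closedBall hρr.le
        have hlevB : {x : EuclideanSpace ℝ (Fin n) | t ≤ f x} ∩ B = B := by
          rw [hlev, Set.inter_eq_right.mpr hBsub]
        have hlevA : {x : EuclideanSpace ℝ (Fin n) | t ≤ f x} ∩ A = A := by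
          rw [hAB, hlevB, hA_def, Set.inter_eq_right.mpr Set.diff_subset]
        rw [hlevA, hlevB, mul_comm]
  -- measurability of level sets
  have hlev_meas : ∀ t : ℝ, MeasurableSet {x : EuclideanSpace ℝ (Fin n) | t ≤ f x} :=
    fun t => measurableSet_le measurable_const hf_cont.measurable
  -- layer cake
  have hlayer : ∀ S : Set (EuclideanSpace ℝ (Fin n)), (∫⁻ x in S, ENNReal.ofReal (f x))
      = ∫⁻ t in Set.Ioi (0:ℝ), volume ({x : EuclideanSpace ℝ (Fin n) | t ≤ f x} ∩ S) := by
    intro S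
    rw [lintegral_eq_lintegral_meas_le (volume.restrict S)
      (Filter.Eventually.of_forall fun x => (hf_pos x).le)
      hf_cont.aemeasurable]
    refine lintegral_congr fun t => ?_
    rw [Measure.restrict_apply (hlev_meas t)]
  -- main inequality in ℝ≥0∞
  have key : (∫⁻ x in A, ENNReal.ofReal (f x)) * volume B ≤
      (∫⁻ x in B, ENNReal.ofReal (f x)) * volume A := by
    rw [hlayer A, hlayer B, ← lintegral_mul_const' (volume B) _ hB_fin,
      ← lintegral_mul_const' (volume A) _ hA_fin]
    refine lintegral_mono_ae ?_
    filter_upwards [ae_restrict_mem measurableSet_Ioi] with t ht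
    exact pointwise t ht
  -- integrability
  have hint_B : IntegrableOn f B := hf_cont.continuousOn.integrableOn_compact
    (isCompact_closedBall 0 r)
  have hint_A : IntegrableOn f A := hint_B.mono_set Set.diff_subset
  -- translate lintegrals to integrals
  have htransl : ∀ S : Set (EuclideanSpace ℝ (Fin n)), IntegrableOn f S →
      (∫ x in S, f x) = (∫⁻ x in S, ENNReal.ofReal (f x)).toReal := by
    intro S hS
    rw [integral_eq_lintegral_of_nonneg_ae
      (Filter.Eventually.of_forall fun x => (hf_pos x).le) hf_cont.aestronglyMeasurable]
  have hlintB_fin : (∫⁻ x in B, ENNReal.ofReal (f x)) ≠ ⊤ :=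
    hint_B.lintegral_lt_top.ne
  have hlintA_fin : (∫⁻ x in A, ENNReal.ofReal (f x)) ≠ ⊤ :=
    hint_A.lintegral_lt_top.ne
  -- real-valued form of key inequality
  have key' : (∫ x in A, f x) * (volume B).toReal ≤
      (∫ x in B, f x) * (volume A).toReal := by
    rw [htransl A hint_A, htransl B hint_B, ← ENNReal.toReal_mul, ← ENNReal.toReal_mul]
    exact ENNReal.toReal_mono (ENNReal.mul_ne_top hlintB_fin hA_fin) key
  -- positivity
  have hBvol_pos : 0 < (volume B).toReal :=
    ENNReal.toReal_pos (Metric.measure_closedBall_pos volume 0 hr).ne' hB_fin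
  have hintB_pos : 0 < ∫ x in B, f x := by
    have hc : (0:ℝ) < Real.exp (-Real.pi * r ^ 2 / s ^ 2) := Real.exp_pos _
    have hge : Real.exp (-Real.pi * r ^ 2 / s ^ 2) * (volume B).toReal ≤ ∫ x in B, f x := by
      apply setIntegral_ge_of_const_le_real measurableSet_closedBall hB_fin
      · intro x hx
        rw [Metric.mem_closedBall, dist_zero_right] at hx
        rw [Real.exp_le_exp, div_le_div_iff₀ hs2 hs2]
        have hx2 : ‖x‖ ^ 2 ≤ r ^ 2 := by nlinarith [norm_nonneg x]
        nlinarith [mul_pos Real.pi_pos hs2]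
      · exact hint_B
    nlinarith
  -- finish
  show ((s ^ n)⁻¹ * ∫ x in B \ K, f x) / ((s ^ n)⁻¹ * ∫ x in B, f x) ≤ _
  have hsn : ((s : ℝ) ^ n)⁻¹ ≠ 0 := inv_ne_zero (pow_ne_zero _ hs.ne')
  rw [mul_div_mul_left _ _ hsn]
  rw [div_le_div_iff₀ hintB_pos hBvol_pos]
  calc (∫ x in B \ K, f x) * (volume B).toReal
      ≤ (∫ x in B, f x) * (volume (B \ K)).toReal := key'
    _ = (volume (B \ K)).toReal * ∫ x in B, f x := mul_comm _ _
end

section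
/- Let Λ ⊆ ℝⁿ be a full-rank lattice, let r > 0, and set s = r·sqrt(2π/n). Then Overlap(Λ, r) ≤ 2·ρ_{2s}(Λ \ {0}). -/
open MeasureTheory

/-- The fraction of a ball of radius `r` centered at a lattice point overlapping with
balls of equal radius centered at all other lattice points. -/
noncomputable def overlapFrac {n : ℕ} (Λ : Set (EuclideanSpace ℝ (Fin n))) (r : ℝ) : ℝ :=
  (volume (⋃ y ∈ Λ \ {0}, Metric.closedBall (0 : EuclideanSpace ℝ (Fin n)) r ∩
      Metric.closedBall y r)).toReal /
    (volume (Metric.closedBall (0 : EuclideanSpace ℝ (Fin n)) r)).toReal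

/- ### Auxiliary lemmas -/

lemma summable_gauss_int {a : ℝ} (ha : 0 < a) :
    Summable fun k : ℤ => Real.exp (-a * (k : ℝ) ^ 2) := by
  have hnat : Summable fun m : ℕ => Real.exp (-a * (m : ℝ) ^ 2) := by
    refine Summable.of_nonneg_of_le (fun m => (Real.exp_pos _).le) (fun m => ?_)
      (summable_geometric_of_lt_one (Real.exp_pos (-a)).le
        (Real.exp_lt_one_iff.mpr (neg_neg_iff_pos.mpr ha)))
    rw [← Real.exp_nat_mul]
    apply Real.exp_le_exp.mpr
    have hm : (m : ℝ) ≤ (m : ℝ) ^ 2 := by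
      have := Nat.le_self_pow (two_ne_zero) m
      exact_mod_cast this
    nlinarith
  apply Summable.of_nat_of_neg
  · exact hnat
  · refine hnat.congr fun m => ?_
    push_cast
    ring_nf

lemma summable_gauss_zn (n : ℕ) {a : ℝ} (ha : 0 < a) :
    Summable fun z : Fin n → ℤ => Real.exp (-a * ∑ i, ((z i : ℝ)) ^ 2) := by
  induction n with
  | zero => exact Summable.of_finite
  | succ n ih =>
    have h := (summable_gauss_int ha).mul_of_nonneg ih
      (fun k => (Real.exp_pos _).le) (fun z => (Real.exp_pos _).le)
    have e := Fin.consEquiv (fun _ : Fin (n + 1) => ℤ)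
    refine ((Fin.consEquiv (fun _ : Fin (n + 1) => ℤ)).summable_iff).mp ?_
    refine h.congr fun p => ?_
    simp only [Function.comp, Fin.consEquiv_apply]
    rw [← Real.exp_add, Fin.sum_univ_succ]
    congr 1
    simp [Fin.cons_zero, Fin.cons_succ]
    ring

lemma cap_subset {n : ℕ} (r : ℝ) (y x : EuclideanSpace ℝ (Fin n))
    (hx : x ∈ Metric.closedBall (0 : EuclideanSpace ℝ (Fin n)) r ∩ Metric.closedBall y r) :
    x ∈ Metric.closedBall ((2:ℝ)⁻¹ • y) (Real.sqrt (max 0 (r ^ 2 - ‖y‖ ^ 2 / 4))) := by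
  obtain ⟨hx1, hx2⟩ := hx
  rw [Metric.mem_closedBall, dist_zero_right] at hx1
  rw [Metric.mem_closedBall, dist_eq_norm] at hx2
  rw [Metric.mem_closedBall, dist_eq_norm]
  apply Real.le_sqrt_of_sq_le
  refine le_trans ?_ (le_max_right 0 _)
  have hx1' : ‖x‖ ^ 2 ≤ r ^ 2 := by nlinarith [norm_nonneg x]
  have hx2' : ‖x - y‖ ^ 2 ≤ r ^ 2 := by nlinarith [norm_nonneg (x - y)]
  have e1 := norm_sub_sq_real x ((2:ℝ)⁻¹ • y)
  have e2 := norm_sub_sq_real x y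
  rw [real_inner_smul_right] at e1
  have e3 : ‖(2:ℝ)⁻¹ • y‖ = 2⁻¹ * ‖y‖ := by
    rw [norm_smul]; norm_num
  rw [e3] at e1
  nlinarith [e1, e2]

lemma key_pow (n : ℕ) (hn : 1 ≤ n) (r s : ℝ) (hr : 0 < r)
    (hs2 : s ^ 2 = r ^ 2 * (2 * Real.pi / n)) (Y : ℝ) :
    Real.sqrt (max 0 (r ^ 2 - Y / 4)) ^ n ≤ Real.exp (-Real.pi * Y / (2 * s) ^ 2) * r ^ n := by
  have hπ := Real.pi_pos
  have hn' : (0:ℝ) < n := by exact_mod_cast hn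
  have h1 : max 0 (r ^ 2 - Y / 4) ≤ r ^ 2 * Real.exp (-Y / (4 * r ^ 2)) := by
    apply max_le
    · positivity
    · have hexp := Real.add_one_le_exp (-Y / (4 * r ^ 2))
      have heq : r ^ 2 * (-Y / (4 * r ^ 2)) = -Y / 4 := by field_simp
      nlinarith [Real.exp_pos (-Y / (4 * r ^ 2))]
  have h2 : Real.sqrt (max 0 (r ^ 2 - Y / 4)) ≤ r * Real.exp (-Y / (8 * r ^ 2)) := by
    have hsq : ∀ t : ℝ, Real.sqrt (Real.exp t) = Real.exp (t / 2) := fun t => by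
      rw [show Real.exp t = Real.exp (t / 2) * Real.exp (t / 2) by
        rw [← Real.exp_add]; congr 1; ring, Real.sqrt_mul_self (Real.exp_pos _).le]
    have hs : Real.sqrt (r ^ 2 * Real.exp (-Y / (4 * r ^ 2)))
        = r * Real.exp (-Y / (8 * r ^ 2)) := by
      rw [Real.sqrt_mul (sq_nonneg r), Real.sqrt_sq hr.le, hsq]
      congr 2
      ring
    rw [← hs]
    exact Real.sqrt_le_sqrt h1
  have h3 : Real.sqrt (max 0 (r ^ 2 - Y / 4)) ^ n ≤ (r * Real.exp (-Y / (8 * r ^ 2))) ^ n :=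
    pow_le_pow_left₀ (Real.sqrt_nonneg _) h2 n
  refine h3.trans (le_of_eq ?_)
  rw [mul_pow, ← Real.exp_nat_mul, mul_comm]
  congr 1
  have hs0 : s ^ 2 ≠ 0 := by
    rw [hs2]; positivity
  have h4s : (2 * s) ^ 2 = 4 * (r ^ 2 * (2 * Real.pi / n)) := by
    rw [mul_pow, hs2]; norm_num
  rw [h4s]
  field_simp
  ring

set_option maxHeartbeats 1000000 in
theorem overlap_upper_bound (n : ℕ) (hn : 1 ≤ n) (Λ : Set (EuclideanSpace ℝ (Fin n)))
    (hΛ : IsLattice Λ) (r : ℝ) (hr : 0 < r)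
    (s : ℝ) (hsdef : s = r * Real.sqrt (2 * Real.pi / n)) :
    overlapFrac Λ r ≤ 2 * rhoSet n (2 * s) (Λ \ {0}) := by
  classical
  obtain ⟨b, hb⟩ := hΛ
  have hπ := Real.pi_pos
  have hn' : (0:ℝ) < n := by exact_mod_cast hn
  have hs2 : s ^ 2 = r ^ 2 * (2 * Real.pi / n) := by
    rw [hsdef, mul_pow, Real.sq_sqrt (by positivity)]
  -- the lattice as the range of an injective map
  set f : (Fin n → ℤ) → EuclideanSpace ℝ (Fin n) :=
    fun z => ∑ i, (z i : ℝ) • b i with hf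
  have hfeq : ∀ z, f z = b.equivFun.symm (fun i => (z i : ℝ)) := by
    intro z; rw [Module.Basis.equivFun_symm_apply]
  have hfinj : Function.Injective f := by
    intro z z' h
    rw [hfeq, hfeq] at h
    have h2 := b.equivFun.symm.injective h
    funext i
    have := congrFun h2 i
    exact_mod_cast this
  have hrange : Λ = Set.range f := by
    rw [hb]; ext x; simp only [Set.mem_setOf_eq, Set.mem_range, eq_comm, hf]
  -- the Gaussian weight
  set G : EuclideanSpace ℝ (Fin n) → ℝ :=
    fun x => Real.exp (-Real.pi * ‖x‖ ^ 2 / (2 * s) ^ 2) with hG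
  -- summability of the Gaussian over the lattice
  have hGsum : Summable fun x : ↥(Λ \ {0}) => G (x : EuclideanSpace ℝ (Fin n)) := by
    have hs0 : (0:ℝ) < s := by
      rw [hsdef]; positivity
    have hq : (0:ℝ) < Real.pi / (2 * s) ^ 2 := by positivity
    set T : EuclideanSpace ℝ (Fin n) →L[ℝ] (Fin n → ℝ) :=
      LinearMap.toContinuousLinearMap (b.equivFun : _ →ₗ[ℝ] (Fin n → ℝ)) with hT
    set C : ℝ := ‖T‖ + 1 with hC
    have hC0 : 0 < C := by positivity
    set a : ℝ := Real.pi / (2 * s) ^ 2 / (n * C ^ 2) with ha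
    have ha0 : 0 < a := by positivity
    have hbase : Summable fun z : Fin n → ℤ => G (f z) := by
      refine Summable.of_nonneg_of_le (fun z => (Real.exp_pos _).le) (fun z => ?_)
        (summable_gauss_zn n ha0)
      rw [hG]
      apply Real.exp_le_exp.mpr
      -- coordinate bound
      have hTfz : T (f z) = fun i => (z i : ℝ) := by
        rw [hfeq, hT]
        simp only [LinearMap.coe_toContinuousLinearMap', LinearEquiv.coe_coe,
          LinearEquiv.apply_symm_apply]
      have hcoord : ∑ i, ((z i : ℝ)) ^ 2 ≤ n * (C ^ 2 * ‖f z‖ ^ 2) := by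
        have hnorm : ‖T (f z)‖ ≤ C * ‖f z‖ := by
          refine (T.le_opNorm (f z)).trans ?_
          have : (0:ℝ) ≤ ‖f z‖ := norm_nonneg _
          nlinarith [norm_nonneg (T : _ →L[ℝ] _)]
        have hsq : ‖T (f z)‖ ^ 2 ≤ C ^ 2 * ‖f z‖ ^ 2 := by
          nlinarith [norm_nonneg (T (f z)), norm_nonneg (f z), mul_nonneg hC0.le (norm_nonneg (f z))]
        have hterm : ∀ i, ((z i : ℝ)) ^ 2 ≤ ‖T (f z)‖ ^ 2 := by
          intro i
          have h1 : ‖(fun i => (z i : ℝ)) i‖ ≤ ‖T (f z)‖ := by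
            rw [hTfz]; exact norm_le_pi_norm (fun j : Fin n => ((z j : ℝ))) i
          have h2 : |((z i : ℝ))| ≤ ‖T (f z)‖ := by
            simpa [Real.norm_eq_abs] using h1
          nlinarith [abs_nonneg ((z i : ℝ)), sq_abs ((z i : ℝ))]
        calc ∑ i, ((z i : ℝ)) ^ 2 ≤ ∑ _i : Fin n, ‖T (f z)‖ ^ 2 :=
              Finset.sum_le_sum fun i _ => hterm i
          _ = n * ‖T (f z)‖ ^ 2 := by
              rw [Finset.sum_const, Finset.card_univ, Fintype.card_fin, nsmul_eq_mul]
          _ ≤ n * (C ^ 2 * ‖f z‖ ^ 2) := by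
              apply mul_le_mul_of_nonneg_left hsq hn'.le
      -- conclude
      have hsplit : -Real.pi * ‖f z‖ ^ 2 / (2 * s) ^ 2
          = -(Real.pi / (2 * s) ^ 2 * ‖f z‖ ^ 2) := by ring
      have hsplit2 : -a * ∑ i, ((z i : ℝ)) ^ 2 = -(a * ∑ i, ((z i : ℝ)) ^ 2) := by ring
      rw [hsplit, hsplit2, neg_le_neg_iff]
      have : a * ∑ i, ((z i : ℝ)) ^ 2 ≤ a * (n * (C ^ 2 * ‖f z‖ ^ 2)) :=
        mul_le_mul_of_nonneg_left hcoord ha0.le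
      refine this.trans (le_of_eq ?_)
      rw [ha]
      field_simp [hn'.ne', hC0.ne', hs0.ne']
    have hΛsum : Summable fun x : ↥(Set.range f) => G (x : EuclideanSpace ℝ (Fin n)) := by
      refine (Equiv.ofInjective f hfinj).summable_iff.mp ?_
      exact hbase.congr fun z => rfl
    have hincl : Function.Injective
        (Set.inclusion (hrange ▸ Set.diff_subset : Λ \ {0} ⊆ Set.range f)) :=
      Set.inclusion_injective _
    exact (hΛsum.comp_injective hincl).congr fun x => rfl
  -- measure-theoretic part
  set B0 := Metric.closedBall (0 : EuclideanSpace ℝ (Fin n)) r with hB0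
  have hVfin : volume B0 ≠ ⊤ := measure_closedBall_lt_top.ne
  have hV0 : volume B0 ≠ 0 := (Metric.measure_closedBall_pos volume 0 hr).ne'
  have hVball : volume B0 = ENNReal.ofReal (r ^ n) *
      volume (Metric.ball (0 : EuclideanSpace ℝ (Fin n)) 1) := by
    rw [hB0, Measure.addHaar_closedBall volume 0 hr.le, finrank_euclideanSpace_fin]
  have hcount : (Λ \ {0}).Countable := by
    refine Set.Countable.mono Set.diff_subset ?_
    rw [hrange]; exact Set.countable_range f
  have keyvol : ∀ y : EuclideanSpace ℝ (Fin n),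
      volume (B0 ∩ Metric.closedBall y r) ≤ ENNReal.ofReal (G y) * volume B0 := by
    intro y
    calc volume (B0 ∩ Metric.closedBall y r)
        ≤ volume (Metric.closedBall ((2:ℝ)⁻¹ • y)
            (Real.sqrt (max 0 (r ^ 2 - ‖y‖ ^ 2 / 4)))) :=
          measure_mono fun x hx => cap_subset r y x hx
      _ = ENNReal.ofReal (Real.sqrt (max 0 (r ^ 2 - ‖y‖ ^ 2 / 4)) ^ n) *
            volume (Metric.ball (0 : EuclideanSpace ℝ (Fin n)) 1) := by
          rw [Measure.addHaar_closedBall volume _ (Real.sqrt_nonneg _),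
            finrank_euclideanSpace_fin]
      _ ≤ ENNReal.ofReal (G y * r ^ n) *
            volume (Metric.ball (0 : EuclideanSpace ℝ (Fin n)) 1) := by
          gcongr
          exact key_pow n hn r s hr hs2 (‖y‖ ^ 2)
      _ = ENNReal.ofReal (G y) * volume B0 := by
          rw [hVball, ENNReal.ofReal_mul (Real.exp_pos _).le, mul_assoc]
  have hρ0 : 0 ≤ rhoSet n (2 * s) (Λ \ {0}) :=
    tsum_nonneg fun _ => (Real.exp_pos _).le
  have hUbound : volume (⋃ y ∈ Λ \ {0}, B0 ∩ Metric.closedBall y r)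
      ≤ ENNReal.ofReal (rhoSet n (2 * s) (Λ \ {0})) * volume B0 := by
    calc volume (⋃ y ∈ Λ \ {0}, B0 ∩ Metric.closedBall y r)
        ≤ ∑' y : ↥(Λ \ {0}), volume (B0 ∩ Metric.closedBall (y : EuclideanSpace ℝ (Fin n)) r) :=
          measure_biUnion_le volume hcount _
      _ ≤ ∑' y : ↥(Λ \ {0}), ENNReal.ofReal (G (y : EuclideanSpace ℝ (Fin n))) * volume B0 :=
          ENNReal.tsum_le_tsum fun y => keyvol y
      _ = (∑' y : ↥(Λ \ {0}), ENNReal.ofReal (G (y : EuclideanSpace ℝ (Fin n)))) * volume B0 :=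
          ENNReal.tsum_mul_right
      _ = ENNReal.ofReal (rhoSet n (2 * s) (Λ \ {0})) * volume B0 := by
          rw [rhoSet, ENNReal.ofReal_tsum_of_nonneg (fun _ => (Real.exp_pos _).le) hGsum]
  have hVpos : 0 < (volume B0).toReal := ENNReal.toReal_pos hV0 hVfin
  rw [overlapFrac, div_le_iff₀ hVpos]
  calc (volume (⋃ y ∈ Λ \ {0}, B0 ∩ Metric.closedBall y r)).toReal
      ≤ (ENNReal.ofReal (rhoSet n (2 * s) (Λ \ {0})) * volume B0).toReal :=
        ENNReal.toReal_mono (ENNReal.mul_ne_top ENNReal.ofReal_ne_top hVfin) hUbound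
    _ = rhoSet n (2 * s) (Λ \ {0}) * (volume B0).toReal := by
        rw [ENNReal.toReal_mul, ENNReal.toReal_ofReal hρ0]
    _ ≤ 2 * rhoSet n (2 * s) (Λ \ {0}) * (volume B0).toReal := by
        nlinarith
end

section
/- Let Λ ⊆ ℝⁿ be a full-rank lattice, let ε > 0, and let s > 0 satisfy ρ_s(Λ \ {0}) ≤ ε. Then for every r with 0 < r ≤ (s/2)·sqrt(n/(2π)), we have Overlap(Λ, r) ≤ 2ε. -/
open MeasureTheory

/- ### Auxiliary lemmas -/

lemma bocp_summable_exp_neg_int_sq {c : ℝ} (hc : 0 < c) :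
    Summable fun m : ℤ => Real.exp (-c * (m : ℝ) ^ 2) := by
  have key : Summable fun m : ℕ => Real.exp (-c * (m : ℝ) ^ 2) := by
    refine Summable.of_nonneg_of_le (fun m => (Real.exp_pos _).le) (fun m => ?_)
      (summable_geometric_of_lt_one (Real.exp_pos (-c)).le
        (Real.exp_lt_one_iff.mpr (by linarith)))
    rw [← Real.exp_nat_mul]
    apply Real.exp_le_exp.mpr
    have h1 : (m : ℝ) ≤ (m : ℝ) ^ 2 := by exact_mod_cast Nat.le_self_pow two_ne_zero m
    nlinarith
  apply Summable.of_nat_of_neg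
  · exact_mod_cast key
  · have : (fun m : ℕ => Real.exp (-c * ((-(m : ℤ) : ℤ) : ℝ) ^ 2))
        = fun m : ℕ => Real.exp (-c * (m : ℝ) ^ 2) := by
      funext m; push_cast; ring_nf
    exact this ▸ key

lemma bocp_summable_pi_int (n : ℕ) (g : ℤ → ℝ) (hg0 : 0 ≤ g) (hg : Summable g) :
    Summable fun z : Fin n → ℤ => ∏ i, g (z i) := by
  induction n with
  | zero => exact Summable.of_finite
  | succ n ih =>
    have hp : 0 ≤ fun z : Fin n → ℤ => ∏ i, g (z i) :=
      fun z => Finset.prod_nonneg fun i _ => hg0 _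
    have h2 := hg.mul_of_nonneg ih hg0 hp
    have he : (fun z : Fin (n + 1) → ℤ => ∏ i, g (z i))
        = (fun p : ℤ × (Fin n → ℤ) => g p.1 * ∏ i, g (p.2 i)) ∘ (Fin.consEquiv (fun _ : Fin (n+1) => ℤ)).symm := by
      funext z
      simp only [Function.comp_apply, Fin.prod_univ_succ]
      rfl
    rw [he]
    exact h2.comp_injective (Equiv.injective _)

set_option maxHeartbeats 1000000 in
lemma bocp_summable_rho {n : ℕ} (hn : 1 ≤ n)
    (b : Module.Basis (Fin n) ℝ (EuclideanSpace ℝ (Fin n))) (s : ℝ) (hs : 0 < s)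
    (A : Set (EuclideanSpace ℝ (Fin n)))
    (hA : A ⊆ {x | ∃ z : Fin n → ℤ, x = ∑ i, (z i : ℝ) • b i}) :
    Summable fun x : A =>
      Real.exp (-Real.pi * ‖(x : EuclideanSpace ℝ (Fin n))‖ ^ 2 / s ^ 2) := by
  classical
  set T : EuclideanSpace ℝ (Fin n) →L[ℝ] (Fin n → ℝ) := LinearMap.toContinuousLinearMap b.equivFun.toLinearMap with hT
  set C : ℝ := ‖T‖ + 1 with hC
  have hC0 : 0 < C := by positivity
  have hN : (0 : ℝ) < n := by exact_mod_cast hn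
  set a : ℝ := Real.pi / (s ^ 2 * n * C ^ 2) with ha
  have ha0 : 0 < a := by positivity
  set g : (Fin n → ℤ) → ℝ := fun z => ∏ i, Real.exp (-a * (z i : ℝ) ^ 2) with hgdef
  have hgsum : Summable g := by
    rw [hgdef]
    exact bocp_summable_pi_int n (fun m : ℤ => Real.exp (-a * (m : ℝ) ^ 2))
      (fun m => (Real.exp_pos _).le) (bocp_summable_exp_neg_int_sq ha0)
  -- the key pointwise bound
  have key : ∀ z : Fin n → ℤ,
      Real.exp (-Real.pi * ‖(∑ i, (z i : ℝ) • b i : EuclideanSpace ℝ (Fin n))‖ ^ 2 / s ^ 2) ≤ g z := by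
    intro z
    set x : EuclideanSpace ℝ (Fin n) := ∑ i, (z i : ℝ) • b i with hx
    have hTx : T x = fun i => (z i : ℝ) := by
      rw [hT]
      simp only [LinearMap.coe_toContinuousLinearMap', LinearEquiv.coe_coe]
      rw [Module.Basis.equivFun_apply, hx, b.repr_sum_self]
    have hzb : ∀ i, |(z i : ℝ)| ≤ C * ‖x‖ := by
      intro i
      have h1 : ‖T x‖ ≤ ‖T‖ * ‖x‖ := T.le_opNorm x
      have h2 : ‖(fun i => (z i : ℝ)) i‖ ≤ ‖T x‖ := by
        rw [← hTx] at *; exact norm_le_pi_norm _ i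
      have : ‖T‖ * ‖x‖ ≤ C * ‖x‖ :=
        mul_le_mul_of_nonneg_right (by simp [hC]) (norm_nonneg x)
      calc |(z i : ℝ)| = ‖(fun i => (z i : ℝ)) i‖ := by simp [Real.norm_eq_abs]
        _ ≤ ‖T x‖ := h2
        _ ≤ ‖T‖ * ‖x‖ := h1
        _ ≤ C * ‖x‖ := this
    have hsum : ∑ i, (z i : ℝ) ^ 2 ≤ n * (C * ‖x‖) ^ 2 := by
      calc ∑ i, (z i : ℝ) ^ 2 ≤ ∑ _i : Fin n, (C * ‖x‖) ^ 2 := by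
            apply Finset.sum_le_sum
            intro i _
            have := hzb i
            nlinarith [abs_nonneg ((z i : ℝ)), sq_abs ((z i : ℝ))]
        _ = n * (C * ‖x‖) ^ 2 := by simp [mul_comm]
    have hstep : a * ∑ i, (z i : ℝ) ^ 2 ≤ Real.pi * ‖x‖ ^ 2 / s ^ 2 := by
      have h1 : a * ∑ i, (z i : ℝ) ^ 2 ≤ a * (n * (C * ‖x‖) ^ 2) :=
        mul_le_mul_of_nonneg_left hsum ha0.le
      have h2 : a * (n * (C * ‖x‖) ^ 2) = Real.pi * ‖x‖ ^ 2 / s ^ 2 := by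
        rw [ha]; field_simp
      exact h1.trans_eq h2
    have hg : g z = Real.exp (-a * ∑ i, (z i : ℝ) ^ 2) := by
      simp only [hgdef]
      rw [← Real.exp_sum]
      congr 1
      rw [Finset.mul_sum]
    rw [hg]
    apply Real.exp_le_exp.mpr
    have : -Real.pi * ‖x‖ ^ 2 / s ^ 2 = -(Real.pi * ‖x‖ ^ 2 / s ^ 2) := by ring
    rw [this]
    linarith
  -- transfer summability to the subtype
  set φ : A → (Fin n → ℤ) := fun x => Classical.choose (hA x.2) with hφ
  have hφspec : ∀ x : A, (x : EuclideanSpace ℝ (Fin n)) = ∑ i, (φ x i : ℝ) • b i := fun x =>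
    Classical.choose_spec (hA x.2)
  have hφinj : Function.Injective φ := by
    intro x y hxy
    apply Subtype.ext
    rw [hφspec x, hφspec y, hxy]
  have hcomp : Summable (g ∘ φ) := hgsum.comp_injective hφinj
  refine Summable.of_nonneg_of_le (fun x => (Real.exp_pos _).le) (fun x => ?_) hcomp
  rw [hφspec x]
  exact key (φ x)

lemma bocp_overlap_ball_subset {n : ℕ} (r : ℝ) (y x : EuclideanSpace ℝ (Fin n))
    (hx : x ∈ Metric.closedBall (0 : EuclideanSpace ℝ (Fin n)) r ∩ Metric.closedBall y r) :
    x ∈ Metric.closedBall ((2 : ℝ)⁻¹ • y) (Real.sqrt (r ^ 2 - ‖y‖ ^ 2 / 4)) := by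
  obtain ⟨h1, h2⟩ := hx
  rw [Metric.mem_closedBall, dist_zero_right] at h1
  rw [Metric.mem_closedBall, dist_eq_norm] at h2
  rw [Metric.mem_closedBall, dist_eq_norm]
  have par := parallelogram_law_with_norm ℝ (x - (2 : ℝ)⁻¹ • y) ((2 : ℝ)⁻¹ • y)
  have e1 : x - (2 : ℝ)⁻¹ • y + (2 : ℝ)⁻¹ • y = x := by abel
  have e2 : x - (2 : ℝ)⁻¹ • y - (2 : ℝ)⁻¹ • y = x - y := by
    rw [sub_sub, ← add_smul]
    norm_num
  rw [e1, e2] at par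
  have hy2 : ‖(2 : ℝ)⁻¹ • y‖ = 2⁻¹ * ‖y‖ := by
    rw [norm_smul]; simp
  have hkey : ‖x - (2 : ℝ)⁻¹ • y‖ ^ 2 ≤ r ^ 2 - ‖y‖ ^ 2 / 4 := by
    nlinarith [norm_nonneg x, norm_nonneg (x - y), norm_nonneg (x - (2 : ℝ)⁻¹ • y),
      norm_nonneg y]
  have hnn : 0 ≤ r ^ 2 - ‖y‖ ^ 2 / 4 := (sq_nonneg _).trans hkey
  exact (Real.le_sqrt (norm_nonneg _) hnn).mpr hkey

lemma bocp_vol_inter_le {n : ℕ} (hn : 1 ≤ n) (s r : ℝ) (hs : 0 < s) (hr : 0 < r)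
    (hr2 : r ≤ s / 2 * Real.sqrt (n / (2 * Real.pi))) (y : EuclideanSpace ℝ (Fin n)) :
    volume (Metric.closedBall (0 : EuclideanSpace ℝ (Fin n)) r ∩ Metric.closedBall y r)
      ≤ ENNReal.ofReal (Real.exp (-Real.pi * ‖y‖ ^ 2 / s ^ 2)) *
        volume (Metric.closedBall (0 : EuclideanSpace ℝ (Fin n)) r) := by
  have hπ : (0 : ℝ) < Real.pi := Real.pi_pos
  have hN : (0 : ℝ) < n := by exact_mod_cast hn
  set R := Real.sqrt (r ^ 2 - ‖y‖ ^ 2 / 4) with hR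
  have hR0 : 0 ≤ R := Real.sqrt_nonneg _
  set E' := Real.exp (-Real.pi * ‖y‖ ^ 2 / s ^ 2) with hE'
  have hE'0 : 0 < E' := Real.exp_pos _
  have hreal : R ^ n ≤ E' * r ^ n := by
    by_cases hc : r ^ 2 - ‖y‖ ^ 2 / 4 ≤ 0
    · have hz : R = 0 := Real.sqrt_eq_zero'.mpr hc
      rw [hz, zero_pow (by omega : n ≠ 0)]
      positivity
    · push_neg at hc
      set q := ‖y‖ ^ 2 / 4 with hq
      have hrr : (0 : ℝ) < r ^ 2 := by positivity
      have hu : r ^ 2 - q = (1 - q / r ^ 2) * r ^ 2 := by field_simp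
      have h1u : 0 ≤ 1 - q / r ^ 2 := by
        have : q / r ^ 2 < 1 := (div_lt_one hrr).mpr (by linarith)
        linarith
      -- cleared form of the radius hypothesis
      have hrsq : 8 * Real.pi * r ^ 2 ≤ n * s ^ 2 := by
        have h := pow_le_pow_left₀ hr.le hr2 2
        rw [mul_pow, Real.sq_sqrt (by positivity : (0:ℝ) ≤ (n : ℝ) / (2 * Real.pi))] at h
        have : (s / 2) ^ 2 * ((n : ℝ) / (2 * Real.pi)) = n * s ^ 2 / (8 * Real.pi) := by
          field_simp; ring
        rw [this] at h
        rw [← le_div_iff₀' (by positivity : (0:ℝ) < 8 * Real.pi)]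
        calc r ^ 2 ≤ (n : ℝ) * s ^ 2 / (8 * Real.pi) := h
          _ = (n : ℝ) * s ^ 2 / (8 * Real.pi) := rfl
      have hsq : (R ^ n) ^ 2 ≤ (E' * r ^ n) ^ 2 := by
        have hRsq : (R ^ n) ^ 2 = (r ^ 2 - q) ^ n := by
          rw [pow_right_comm, Real.sq_sqrt hc.le]
        have h2 : (r ^ 2 - q) ^ n ≤ Real.exp (-(q / r ^ 2)) ^ n * (r ^ 2) ^ n := by
          rw [hu, mul_pow]
          apply mul_le_mul_of_nonneg_right _ (by positivity)
          exact pow_le_pow_left₀ h1u (by linarith [Real.add_one_le_exp (-(q / r ^ 2))]) n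
        rw [← Real.exp_nat_mul] at h2
        have h3 : Real.exp ((n : ℝ) * -(q / r ^ 2)) ≤ Real.exp (-2 * Real.pi * ‖y‖ ^ 2 / s ^ 2) := by
          apply Real.exp_le_exp.mpr
          have hmain : 2 * Real.pi * ‖y‖ ^ 2 / s ^ 2 ≤ (n : ℝ) * (q / r ^ 2) := by
            rw [← mul_div_assoc, div_le_div_iff₀ (by positivity) (by positivity), hq]
            nlinarith [mul_le_mul_of_nonneg_left hrsq
              (show (0:ℝ) ≤ ‖y‖ ^ 2 / 4 by positivity)]
          have : -2 * Real.pi * ‖y‖ ^ 2 / s ^ 2 = -(2 * Real.pi * ‖y‖ ^ 2 / s ^ 2) := by ring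
          rw [this]
          have h' : (n : ℝ) * -(q / r ^ 2) = -((n : ℝ) * (q / r ^ 2)) := by ring
          rw [h']
          linarith
        have h4 : Real.exp (-2 * Real.pi * ‖y‖ ^ 2 / s ^ 2) = E' ^ 2 := by
          rw [hE', ← Real.exp_nat_mul]
          congr 1
          push_cast
          ring
        calc (R ^ n) ^ 2 = (r ^ 2 - q) ^ n := hRsq
          _ ≤ Real.exp ((n : ℝ) * -(q / r ^ 2)) * (r ^ 2) ^ n := h2
          _ ≤ Real.exp (-2 * Real.pi * ‖y‖ ^ 2 / s ^ 2) * (r ^ 2) ^ n :=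
              mul_le_mul_of_nonneg_right h3 (by positivity)
          _ = (E' * r ^ n) ^ 2 := by rw [h4, mul_pow, pow_right_comm]
      have := Real.sqrt_le_sqrt hsq
      rwa [Real.sqrt_sq (by positivity), Real.sqrt_sq (by positivity)] at this
  have h1 : volume (Metric.closedBall (0 : EuclideanSpace ℝ (Fin n)) r ∩ Metric.closedBall y r)
      ≤ volume (Metric.closedBall ((2 : ℝ)⁻¹ • y) R) :=
    measure_mono (fun x hx => bocp_overlap_ball_subset r y x hx)
  rw [Measure.addHaar_closedBall _ _ hR0, Measure.addHaar_closedBall _ _ hr.le,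
    finrank_euclideanSpace_fin] at *
  calc volume (Metric.closedBall (0 : EuclideanSpace ℝ (Fin n)) r ∩ Metric.closedBall y r)
      ≤ ENNReal.ofReal (R ^ n) * volume (Metric.ball (0 : EuclideanSpace ℝ (Fin n)) 1) := h1
    _ ≤ ENNReal.ofReal (E' * r ^ n) * volume (Metric.ball (0 : EuclideanSpace ℝ (Fin n)) 1) :=
        mul_le_mul_left (ENNReal.ofReal_le_ofReal hreal) _
    _ = ENNReal.ofReal E' * (ENNReal.ofReal (r ^ n) *
        volume (Metric.ball (0 : EuclideanSpace ℝ (Fin n)) 1)) := by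
        rw [ENNReal.ofReal_mul hE'0.le, mul_assoc]

theorem ball_overlap_char_part1 (n : ℕ) (hn : 1 ≤ n) (Λ : Set (EuclideanSpace ℝ (Fin n)))
    (hΛ : IsLattice Λ) (ε : ℝ) (hε : 0 < ε) (s : ℝ) (hs : 0 < s)
    (hρ : rhoSet n s (Λ \ {0}) ≤ ε) :
    ∀ r : ℝ, 0 < r → r ≤ (s / 2) * Real.sqrt (n / (2 * Real.pi)) →
      overlapFrac Λ r ≤ 2 * ε := by
  obtain ⟨b, hb⟩ := hΛ
  intro r hr hr2
  set F : (Fin n → ℤ) → EuclideanSpace ℝ (Fin n) := fun z => ∑ i, (z i : ℝ) • b i with hF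
  have hrange : Λ = Set.range F := by
    rw [hb]; ext x; simp [hF, eq_comm, Set.mem_setOf_eq, Set.mem_range]
  have hcount : (Λ \ {0}).Countable :=
    ((hrange ▸ Set.countable_range F).mono Set.diff_subset)
  have hsub : Λ \ {0} ⊆ {x | ∃ z : Fin n → ℤ, x = ∑ i, (z i : ℝ) • b i} := by
    intro x hx
    have := hx.1
    rwa [hb] at this
  have hsummable : Summable fun x : ↥(Λ \ {0}) =>
      Real.exp (-Real.pi * ‖(x : EuclideanSpace ℝ (Fin n))‖ ^ 2 / s ^ 2) :=
    bocp_summable_rho hn b s hs _ hsub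
  set V := volume (Metric.closedBall (0 : EuclideanSpace ℝ (Fin n)) r) with hV
  have hV0 : V ≠ 0 := (Metric.measure_closedBall_pos volume 0 hr).ne'
  have hVtop : V ≠ ⊤ := measure_closedBall_lt_top.ne
  have hVpos : 0 < V.toReal := ENNReal.toReal_pos hV0 hVtop
  set U := ⋃ y ∈ Λ \ {0}, Metric.closedBall (0 : EuclideanSpace ℝ (Fin n)) r ∩ Metric.closedBall y r with hU
  have hUle : volume U ≤ ENNReal.ofReal ε * V := by
    calc volume U ≤ ∑' y : ↥(Λ \ {0}),
          volume (Metric.closedBall (0 : EuclideanSpace ℝ (Fin n)) r ∩ Metric.closedBall (y : EuclideanSpace ℝ (Fin n)) r) :=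
          measure_biUnion_le volume hcount _
      _ ≤ ∑' y : ↥(Λ \ {0}),
          ENNReal.ofReal (Real.exp (-Real.pi * ‖(y : EuclideanSpace ℝ (Fin n))‖ ^ 2 / s ^ 2)) * V :=
          ENNReal.tsum_le_tsum (fun y => bocp_vol_inter_le hn s r hs hr hr2 (y : EuclideanSpace ℝ (Fin n)))
      _ = ENNReal.ofReal (∑' y : ↥(Λ \ {0}),
          Real.exp (-Real.pi * ‖(y : EuclideanSpace ℝ (Fin n))‖ ^ 2 / s ^ 2)) * V := by
          rw [ENNReal.tsum_mul_right,
            ENNReal.ofReal_tsum_of_nonneg (fun _ => (Real.exp_pos _).le) hsummable]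
      _ ≤ ENNReal.ofReal ε * V := by
          apply mul_le_mul_left
          apply ENNReal.ofReal_le_ofReal
          exact hρ
  have h1 : (volume U).toReal ≤ ε * V.toReal := by
    have hfin : ENNReal.ofReal ε * V ≠ ⊤ := ENNReal.mul_ne_top ENNReal.ofReal_ne_top hVtop
    have := ENNReal.toReal_mono hfin hUle
    rwa [ENNReal.toReal_mul, ENNReal.toReal_ofReal hε.le] at this
  have hmain : overlapFrac Λ r ≤ ε := by
    unfold overlapFrac
    rw [← hU, ← hV]
    calc (volume U).toReal / V.toReal ≤ (ε * V.toReal) / V.toReal := by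
          gcongr
      _ = ε := by rw [mul_div_assoc, div_self hVpos.ne', mul_one]
  linarith
end

section
/- Let Λ ⊆ ℝⁿ be a full-rank lattice, let w ∈ ℝⁿ and r > 0. If there exist two distinct points of Λ at Euclidean distance at most r from w, then there exist y, y' ∈ Λ with ‖y - w‖ ≤ r, ‖y' - w‖ ≤ r, and y - y' ∉ 2Λ (i.e., y and y' are distinct modulo 2Λ). In particular, if y₁, y₂ ∈ Λ are distinct, ‖y₁ - w‖ ≤ r, ‖y₂ - w‖ ≤ r, and y₁ - y₂ ∈ 2Λ, then the midpoint (y₁+y₂)/2 lies in Λ, has distance at most r from w, and satisfies ‖(y₁+y₂)/2 - w‖ < max(‖y₁-w‖, ‖y₂-w‖). -/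
lemma midpoint_norm_lt' {E : Type*} [NormedAddCommGroup E] [InnerProductSpace ℝ E]
    {a c : E} (h : a ≠ c) : ‖(1 / 2 : ℝ) • (a + c)‖ < max ‖a‖ ‖c‖ := by
  have hpar := parallelogram_law_with_norm ℝ a c
  have h1 : ‖(1 / 2 : ℝ) • (a + c)‖ = ‖a + c‖ / 2 := by
    rw [norm_smul]; simp [abs_of_nonneg]; ring
  have h2 : 0 < ‖a - c‖ := by rw [norm_pos_iff, sub_ne_zero]; exact h
  have h3 : ‖a‖ ≤ max ‖a‖ ‖c‖ := le_max_left _ _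
  have h4 : ‖c‖ ≤ max ‖a‖ ‖c‖ := le_max_right _ _
  rw [h1]
  nlinarith [norm_nonneg (a + c), norm_nonneg a, norm_nonneg c]

theorem distinct_mod_two_lattice (n : ℕ) (Λ : Set (EuclideanSpace ℝ (Fin n)))
    (hΛ : IsLattice Λ) (w : EuclideanSpace ℝ (Fin n)) (r : ℝ) :
    ((∃ y₁ ∈ Λ, ∃ y₂ ∈ Λ, y₁ ≠ y₂ ∧ ‖y₁ - w‖ ≤ r ∧ ‖y₂ - w‖ ≤ r) →
      ∃ y ∈ Λ, ∃ y' ∈ Λ, ‖y - w‖ ≤ r ∧ ‖y' - w‖ ≤ r ∧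
        ¬ ∃ u ∈ Λ, y - y' = (2 : ℝ) • u) ∧
    (∀ y₁ ∈ Λ, ∀ y₂ ∈ Λ, y₁ ≠ y₂ → ‖y₁ - w‖ ≤ r → ‖y₂ - w‖ ≤ r →
      (∃ u ∈ Λ, y₁ - y₂ = (2 : ℝ) • u) →
        (1 / 2 : ℝ) • (y₁ + y₂) ∈ Λ ∧ ‖(1 / 2 : ℝ) • (y₁ + y₂) - w‖ ≤ r ∧
          ‖(1 / 2 : ℝ) • (y₁ + y₂) - w‖ < max ‖y₁ - w‖ ‖y₂ - w‖) := by
  obtain ⟨b, hb⟩ := hΛ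
  set f : (Fin n → ℤ) → EuclideanSpace ℝ (Fin n) :=
    fun z => ∑ i, (z i : ℝ) • b i with hf
  have hmem : ∀ x, x ∈ Λ ↔ ∃ z, x = f z := by
    intro x; rw [hb]; rfl
  have hrepr : ∀ (z : Fin n → ℤ) (i : Fin n), b.repr (f z) i = (z i : ℝ) := by
    intro z i
    simp [hf, map_sum, Finsupp.single_apply]
  have hinj : ∀ z₁ z₂, f z₁ = f z₂ → z₁ = z₂ := by
    intro z₁ z₂ h
    funext i
    have := congrArg (fun x => b.repr x i) h
    simp only [hrepr] at this
    exact_mod_cast this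
  have hadd : ∀ z₁ z₂, f (z₁ + z₂) = f z₁ + f z₂ := by
    intro z₁ z₂
    simp [hf, add_smul, Finset.sum_add_distrib]
  have hsub : ∀ z₁ z₂, f z₁ - f z₂ = f (z₁ - z₂) := by
    intro z₁ z₂
    simp [hf, sub_smul, Finset.sum_sub_distrib]
  have h2smul : ∀ u : Fin n → ℤ, (2 : ℝ) • f u = f (fun i => 2 * u i) := by
    intro u
    simp [hf, Finset.smul_sum, smul_smul]
  -- midpoint identity: if y₁ - y₂ = 2u then (1/2)(y₁+y₂) = y₂ + u
  have hmid : ∀ y₁ y₂ u : EuclideanSpace ℝ (Fin n), y₁ - y₂ = (2 : ℝ) • u →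
      (1 / 2 : ℝ) • (y₁ + y₂) = y₂ + u := by
    intro y₁ y₂ u h
    have : y₁ = y₂ + (2 : ℝ) • u := by
      rw [← h]; abel
    rw [this]
    module
  -- part 2
  have part2 : ∀ y₁ ∈ Λ, ∀ y₂ ∈ Λ, y₁ ≠ y₂ → ‖y₁ - w‖ ≤ r → ‖y₂ - w‖ ≤ r →
      (∃ u ∈ Λ, y₁ - y₂ = (2 : ℝ) • u) →
        (1 / 2 : ℝ) • (y₁ + y₂) ∈ Λ ∧ ‖(1 / 2 : ℝ) • (y₁ + y₂) - w‖ ≤ r ∧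
          ‖(1 / 2 : ℝ) • (y₁ + y₂) - w‖ < max ‖y₁ - w‖ ‖y₂ - w‖ := by
    intro y₁ h₁ y₂ h₂ hne hr₁ hr₂ ⟨u, hu, hequ⟩
    have hmemmid : (1 / 2 : ℝ) • (y₁ + y₂) ∈ Λ := by
      rw [hmid y₁ y₂ u hequ]
      obtain ⟨z₂, rfl⟩ := (hmem y₂).1 h₂
      obtain ⟨zu, rfl⟩ := (hmem u).1 hu
      rw [hmem, ← hadd]
      exact ⟨_, rfl⟩
    have hne' : y₁ - w ≠ y₂ - w := fun h => hne (by
      have := congrArg (· + w) h; simpa using this)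
    have hlt : ‖(1 / 2 : ℝ) • (y₁ + y₂) - w‖ < max ‖y₁ - w‖ ‖y₂ - w‖ := by
      have := midpoint_norm_lt' hne'
      have heq : (1 / 2 : ℝ) • ((y₁ - w) + (y₂ - w)) = (1 / 2 : ℝ) • (y₁ + y₂) - w := by
        module
      rwa [heq] at this
    exact ⟨hmemmid, le_trans hlt.le (max_le hr₁ hr₂), hlt⟩
  refine ⟨?_, part2⟩
  -- part 1 via descent on the size of coordinate difference
  have descent : ∀ N : ℕ, ∀ z₁ z₂ : Fin n → ℤ, z₁ ≠ z₂ →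
      (∑ i, (z₁ i - z₂ i).natAbs) ≤ N → ‖f z₁ - w‖ ≤ r → ‖f z₂ - w‖ ≤ r →
      ∃ y ∈ Λ, ∃ y' ∈ Λ, ‖y - w‖ ≤ r ∧ ‖y' - w‖ ≤ r ∧
        ¬ ∃ u ∈ Λ, y - y' = (2 : ℝ) • u := by
    intro N
    induction N with
    | zero =>
      intro z₁ z₂ hne hsum _ _
      exfalso
      apply hne
      funext i
      have : (z₁ i - z₂ i).natAbs = 0 := by
        have := Finset.sum_eq_zero_iff.1 (Nat.le_zero.1 hsum) i (Finset.mem_univ i)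
        exact this
      have := Int.natAbs_eq_zero.1 this
      omega
    | succ N ih =>
      intro z₁ z₂ hne hsum h1 h2
      by_cases hc : ∃ u ∈ Λ, f z₁ - f z₂ = (2 : ℝ) • u
      · obtain ⟨u, hu, hequ⟩ := hc
        obtain ⟨zu, rfl⟩ := (hmem u).1 hu
        have hcoord : z₁ - z₂ = fun i => 2 * zu i := by
          apply hinj
          rw [← hsub, hequ, h2smul]
        have hzu : ∃ i, zu i ≠ 0 := by
          by_contra h
          push_neg at h
          apply hne
          funext i
          have h1' := congrFun hcoord i
          simp only [Pi.sub_apply] at h1'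
          have h2' := h i
          omega
        have hfne : f z₁ ≠ f z₂ := fun h => hne (hinj _ _ h)
        obtain ⟨hmidmem, hmidle, _⟩ := part2 (f z₁) ((hmem _).2 ⟨z₁, rfl⟩)
          (f z₂) ((hmem _).2 ⟨z₂, rfl⟩) hfne h1 h2 ⟨f zu, (hmem _).2 ⟨zu, rfl⟩, hequ⟩
        have hmideq : (1 / 2 : ℝ) • (f z₁ + f z₂) = f (z₂ + zu) := by
          rw [hmid _ _ _ hequ, hadd]
        rw [hmideq] at hmidle
        have hne2 : z₂ + zu ≠ z₂ := by
          intro h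
          obtain ⟨i, hi⟩ := hzu
          have := congrFun h i
          simp only [Pi.add_apply] at this
          exact hi (by omega)
        apply ih (z₂ + zu) z₂ hne2 _ hmidle h2
        -- sum bound
        have hsum2 : (∑ i, (z₁ i - z₂ i).natAbs) = 2 * ∑ i, ((z₂ + zu) i - z₂ i).natAbs := by
          rw [Finset.mul_sum]
          apply Finset.sum_congr rfl
          intro i _
          have := congrFun hcoord i
          simp only [Pi.sub_apply] at this
          simp only [Pi.add_apply]
          omega
        have hsumz : (∑ i, ((z₂ + zu) i - z₂ i).natAbs) = ∑ i, (zu i).natAbs := by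
          apply Finset.sum_congr rfl
          intro i _
          simp
        have hpos : 0 < ∑ i, (zu i).natAbs := by
          obtain ⟨i, hi⟩ := hzu
          have h0 : 0 < (zu i).natAbs := by omega
          exact h0.trans_le (Finset.single_le_sum (f := fun i => (zu i).natAbs)
            (fun _ _ => Nat.zero_le _) (Finset.mem_univ i))
        omega
      · exact ⟨f z₁, (hmem _).2 ⟨z₁, rfl⟩, f z₂, (hmem _).2 ⟨z₂, rfl⟩, h1, h2, hc⟩
  rintro ⟨y₁, h₁, y₂, h₂, hne, hr₁, hr₂⟩
  obtain ⟨z₁, rfl⟩ := (hmem y₁).1 h₁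
  obtain ⟨z₂, rfl⟩ := (hmem y₂).1 h₂
  exact descent _ z₁ z₂ (fun h => hne (by rw [h])) le_rfl hr₁ hr₂
end

section
/- Let Λ ⊆ ℝⁿ be a full-rank lattice with dual lattice Λ*, and for ε > 0 define the smoothing parameter η_ε(Λ) = inf{s > 0 : ρ_{1/s}(Λ* \ {0}) ≤ ε}. Then for every 0 < ε < 1 and every r ≥ 1, letting t = sqrt(1 + log(r)/log(1/ε)), one has η_{ε/r}(Λ) ≤ t · η_ε(Λ). -/
open scoped RealInnerProductSpace

lemma gauss_int_summable {a : ℝ} (ha : 0 < a) :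
    Summable (fun k : ℤ => Real.exp (-a * (k : ℝ) ^ 2)) := by
  have hgeo : Summable (fun k : ℕ => Real.exp (-a) ^ k) :=
    summable_geometric_of_lt_one (Real.exp_pos _).le (Real.exp_lt_one_iff.2 (by linarith))
  have hnat : Summable (fun k : ℕ => Real.exp (-a * (k : ℝ) ^ 2)) := by
    refine Summable.of_nonneg_of_le (fun k => (Real.exp_pos _).le) (fun k => ?_) hgeo
    rw [← Real.exp_nat_mul]
    apply Real.exp_le_exp.2
    have h2 : (k : ℝ) ≤ (k : ℝ) ^ 2 := by
      have := Nat.le_self_pow (two_ne_zero) k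
      exact_mod_cast this
    nlinarith
  refine Summable.of_nat_of_neg_add_one (hnat.congr fun k => by push_cast; ring_nf) ?_
  refine Summable.of_nonneg_of_le (fun k => (Real.exp_pos _).le) (fun k => ?_) hnat
  apply Real.exp_le_exp.2
  push_cast
  nlinarith [Nat.cast_nonneg (α := ℝ) k]

lemma gauss_pi_summable (n : ℕ) {a : ℝ} (ha : 0 < a) :
    Summable (fun z : Fin n → ℤ => Real.exp (-a * ∑ i, ((z i : ℝ)) ^ 2)) := by
  induction n with
  | zero =>
    exact .of_finite
  | succ m ih =>
    have key : Summable (fun p : ℤ × (Fin m → ℤ) =>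
        Real.exp (-a * (p.1 : ℝ) ^ 2) * Real.exp (-a * ∑ i, ((p.2 i : ℝ)) ^ 2)) :=
      (gauss_int_summable ha).mul_of_nonneg ih (fun _ => (Real.exp_pos _).le)
        (fun _ => (Real.exp_pos _).le)
    refine ((key.comp_injective (Fin.consEquiv (fun _ => ℤ)).symm.injective)).congr fun z => ?_
    simp only [Function.comp_apply, Fin.consEquiv_symm_apply, Fin.tail_def]
    rw [← Real.exp_add, Fin.sum_univ_succ]
    ring_nf


lemma dual_summable {n : ℕ} {Λ : Set (EuclideanSpace ℝ (Fin n))}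
    (b : Module.Basis (Fin n) ℝ (EuclideanSpace ℝ (Fin n)))
    (hΛ : Λ = {x | ∃ z : Fin n → ℤ, x = ∑ i, (z i : ℝ) • b i})
    (A : Set (EuclideanSpace ℝ (Fin n)))
    (hA : ∀ y ∈ A, ∀ x ∈ Λ, ∃ z : ℤ, ⟪x, y⟫ = (z : ℝ))
    {a : ℝ} (ha : 0 < a) :
    Summable (fun x : A => Real.exp (-a * ‖(x : EuclideanSpace ℝ (Fin n))‖ ^ 2)) := by
  classical
  -- each basis vector is in Λ
  have hbΛ : ∀ i, b i ∈ Λ := by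
    intro i
    rw [hΛ]
    refine ⟨fun j => if j = i then 1 else 0, ?_⟩
    simp [Finset.sum_ite_eq]
  -- integer coordinates of points of A
  have hz : ∀ (x : A) (i : Fin n), ∃ z : ℤ, ⟪b i, (x : EuclideanSpace ℝ (Fin n))⟫ = (z : ℝ) :=
    fun x i => hA x x.2 (b i) (hbΛ i)
  set ι : A → (Fin n → ℤ) := fun x i => Classical.choose (hz x i) with hι
  have hιspec : ∀ (x : A) (i : Fin n),
      ⟪b i, (x : EuclideanSpace ℝ (Fin n))⟫ = ((ι x i : ℤ) : ℝ) :=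
    fun x i => Classical.choose_spec (hz x i)
  -- injectivity
  have hinj : Function.Injective ι := by
    intro x y hxy
    have hib : ∀ i, ⟪b i, (x : EuclideanSpace ℝ (Fin n)) - y⟫ = 0 := by
      intro i
      rw [inner_sub_right, hιspec x i, hιspec y i]
      rw [show ι x i = ι y i from congrFun hxy i]
      ring
    have hall : ∀ v : EuclideanSpace ℝ (Fin n), ⟪v, (x : EuclideanSpace ℝ (Fin n)) - y⟫ = 0 := by
      intro v
      have hv := Module.Basis.sum_repr b v
      rw [← hv, sum_inner]
      simp only [inner_smul_left]
      simp [hib]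
    have : (x : EuclideanSpace ℝ (Fin n)) - y = 0 := by
      have := hall ((x : EuclideanSpace ℝ (Fin n)) - y)
      rwa [inner_self_eq_zero] at this
    have hxy' : (x : EuclideanSpace ℝ (Fin n)) = y := by
      rw [sub_eq_zero] at this; exact this
    exact Subtype.ext hxy'
  -- Cauchy-Schwarz bound
  set C : ℝ := (∑ i, ‖b i‖ ^ 2) + 1 with hC
  have hCpos : 0 < C := by
    have : (0:ℝ) ≤ ∑ i, ‖b i‖ ^ 2 := Finset.sum_nonneg fun i _ => sq_nonneg _
    linarith
  have hbound : ∀ x : A, (∑ i, ((ι x i : ℝ)) ^ 2) ≤ C * ‖(x : EuclideanSpace ℝ (Fin n))‖ ^ 2 := by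
    intro x
    have h1 : ∀ i : Fin n, ((ι x i : ℝ)) ^ 2 ≤ ‖b i‖ ^ 2 * ‖(x : EuclideanSpace ℝ (Fin n))‖ ^ 2 := by
      intro i
      have h2 := abs_real_inner_le_norm (b i) (x : EuclideanSpace ℝ (Fin n))
      have h3 : ((ι x i : ℝ)) ^ 2 = ⟪b i, (x : EuclideanSpace ℝ (Fin n))⟫ ^ 2 := by
        rw [hιspec x i]
      rw [h3, ← sq_abs]
      calc |⟪b i, (x : EuclideanSpace ℝ (Fin n))⟫| ^ 2
          ≤ (‖b i‖ * ‖(x : EuclideanSpace ℝ (Fin n))‖) ^ 2 := by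
            apply pow_le_pow_left₀ (abs_nonneg _) h2
        _ = ‖b i‖ ^ 2 * ‖(x : EuclideanSpace ℝ (Fin n))‖ ^ 2 := by ring
    calc ∑ i, ((ι x i : ℝ)) ^ 2
        ≤ ∑ i, ‖b i‖ ^ 2 * ‖(x : EuclideanSpace ℝ (Fin n))‖ ^ 2 :=
          Finset.sum_le_sum fun i _ => h1 i
      _ = (∑ i, ‖b i‖ ^ 2) * ‖(x : EuclideanSpace ℝ (Fin n))‖ ^ 2 := by
          rw [Finset.sum_mul]
      _ ≤ C * ‖(x : EuclideanSpace ℝ (Fin n))‖ ^ 2 := by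
          apply mul_le_mul_of_nonneg_right _ (sq_nonneg _)
          linarith
  -- comparison
  have hsum := (gauss_pi_summable n (a := a / C) (div_pos ha hCpos)).comp_injective hinj
  refine Summable.of_nonneg_of_le (fun x => (Real.exp_pos _).le) (fun x => ?_) hsum
  simp only [Function.comp_apply]
  apply Real.exp_le_exp.2
  have := hbound x
  have h4 : (a / C) * (∑ i, ((ι x i : ℝ)) ^ 2) ≤ a * ‖(x : EuclideanSpace ℝ (Fin n))‖ ^ 2 := by
    rw [div_mul_eq_mul_div, div_le_iff₀ hCpos]
    calc a * ∑ i, ((ι x i : ℝ)) ^ 2 ≤ a * (C * ‖(x : EuclideanSpace ℝ (Fin n))‖ ^ 2) :=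
        mul_le_mul_of_nonneg_left this ha.le
      _ = a * ‖(x : EuclideanSpace ℝ (Fin n))‖ ^ 2 * C := by ring
  linarith

/-- The dual lattice `Λ* = {y : ⟨x, y⟩ ∈ ℤ for all x ∈ Λ}`. -/
def dualLattice {n : ℕ} (Λ : Set (EuclideanSpace ℝ (Fin n))) :
    Set (EuclideanSpace ℝ (Fin n)) :=
  {y | ∀ x ∈ Λ, ∃ z : ℤ, ⟪x, y⟫ = (z : ℝ)}

/-- The smoothing parameter `η_ε(Λ) = inf {s > 0 : ρ_{1/s}(Λ* \ {0}) ≤ ε}`. -/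
noncomputable def smoothingParam {n : ℕ} (Λ : Set (EuclideanSpace ℝ (Fin n))) (ε : ℝ) : ℝ :=
  sInf {s : ℝ | 0 < s ∧ rhoSet n (1 / s) (dualLattice Λ \ {0}) ≤ ε}

theorem smoothing_param_monotone (n : ℕ) (Λ : Set (EuclideanSpace ℝ (Fin n)))
    (hΛ : IsLattice Λ) (ε : ℝ) (hε0 : 0 < ε) (hε1 : ε < 1) (r : ℝ) (hr : 1 ≤ r) :
    smoothingParam Λ (ε / r) ≤
      Real.sqrt (1 + Real.log r / Real.log (1 / ε)) * smoothingParam Λ ε := by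
  obtain ⟨b, hΛb⟩ := hΛ
  set D : Set (EuclideanSpace ℝ (Fin n)) := dualLattice Λ \ {0} with hD
  have hDmem : ∀ y ∈ D, ∀ x ∈ Λ, ∃ z : ℤ, ⟪x, y⟫ = (z : ℝ) := fun y hy => hy.1
  have hr0 : (0:ℝ) < r := lt_of_lt_of_le one_pos hr
  have hlog1ε : 0 < Real.log (1 / ε) := Real.log_pos (one_lt_one_div hε0 hε1)
  have hlogr : 0 ≤ Real.log r := Real.log_nonneg hr
  set t : ℝ := Real.sqrt (1 + Real.log r / Real.log (1 / ε)) with ht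
  have ht2' : (1:ℝ) ≤ 1 + Real.log r / Real.log (1 / ε) := by
    have : 0 ≤ Real.log r / Real.log (1 / ε) := div_nonneg hlogr hlog1ε.le
    linarith
  have htsq : t ^ 2 = 1 + Real.log r / Real.log (1 / ε) := Real.sq_sqrt (by linarith)
  have ht1 : 1 ≤ t := by
    nlinarith [Real.sqrt_nonneg (1 + Real.log r / Real.log (1 / ε))]
  have ht0 : 0 < t := by linarith
  -- ε ^ (t²-1) = r⁻¹ computations
  have hεne : Real.log ε ≠ 0 := by
    have := Real.log_neg hε0 hε1
    linarith
  have hεpow : ε ^ ((t ^ 2 - 1) : ℝ) = r⁻¹ := by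
    have hts : (t ^ 2 - 1 : ℝ) = Real.log r / Real.log (1 / ε) := by rw [htsq]; ring
    rw [hts, Real.rpow_def_of_pos hε0]
    rw [one_div, Real.log_inv]
    have h5 : Real.log ε * (Real.log r / -Real.log ε) = -Real.log r := by
      have hεne' : -Real.log ε ≠ 0 := neg_ne_zero.2 hεne
      field_simp
    rw [h5, Real.exp_neg, Real.exp_log hr0]
  -- key: membership transfer
  set Sε : Set ℝ := {s : ℝ | 0 < s ∧ rhoSet n (1 / s) D ≤ ε} with hSε
  set Sεr : Set ℝ := {s : ℝ | 0 < s ∧ rhoSet n (1 / s) D ≤ ε / r} with hSεr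
  have hkey : ∀ s ∈ Sε, t * s ∈ Sεr := by
    intro s hs
    obtain ⟨hs0, hρ⟩ := hs
    refine ⟨mul_pos ht0 hs0, ?_⟩
    -- f and g
    set f : D → ℝ := fun x => Real.exp (-Real.pi * ‖(x : EuclideanSpace ℝ (Fin n))‖ ^ 2 / (1/s) ^ 2) with hf
    have hfpos : ∀ x : D, 0 < f x := fun x => Real.exp_pos _
    have hfs : Summable f := by
      refine (dual_summable b hΛb D hDmem (a := Real.pi * s ^ 2)
        (by positivity)).congr fun x => ?_
      congr 1
      field_simp
    have hf1 : ∀ x : D, f x ≤ 1 := by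
      intro x
      apply Real.exp_le_one_iff.2
      have h6 : (0:ℝ) ≤ Real.pi * ‖(x : EuclideanSpace ℝ (Fin n))‖ ^ 2 / (1/s) ^ 2 := by positivity
      have h7 : -Real.pi * ‖(x : EuclideanSpace ℝ (Fin n))‖ ^ 2 / (1/s) ^ 2
          = -(Real.pi * ‖(x : EuclideanSpace ℝ (Fin n))‖ ^ 2 / (1/s) ^ 2) := by ring
      rw [h7]
      linarith
    have hgf : ∀ x : D,
        Real.exp (-Real.pi * ‖(x : EuclideanSpace ℝ (Fin n))‖ ^ 2 / (1/(t*s)) ^ 2)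
          = f x ^ ((t ^ 2 : ℝ)) := by
      intro x
      rw [hf]
      rw [← Real.exp_log (Real.rpow_pos_of_pos (Real.exp_pos _) _)]
      rw [Real.log_rpow (Real.exp_pos _), Real.log_exp]
      congr 1
      have hts : t ≠ 0 := ne_of_gt ht0
      have hss : s ≠ 0 := ne_of_gt hs0
      field_simp
    set S : ℝ := rhoSet n (1 / s) D with hS
    have hS0 : 0 ≤ S := tsum_nonneg fun x => (Real.exp_pos _).le
    have hfleS : ∀ x : D, f x ≤ S := fun x => Summable.le_tsum hfs x fun y _ => (hfpos y).le
    have hgle : ∀ x : D, f x ^ ((t ^ 2 : ℝ)) ≤ f x := by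
      intro x
      calc f x ^ ((t ^ 2 : ℝ)) ≤ f x ^ (1:ℝ) :=
          Real.rpow_le_rpow_of_exponent_ge (hfpos x) (hf1 x) (by nlinarith)
        _ = f x := Real.rpow_one _
    have hgsum : Summable (fun x : D => f x ^ ((t ^ 2 : ℝ))) :=
      Summable.of_nonneg_of_le (fun x => (Real.rpow_nonneg (hfpos x).le _)) hgle hfs
    have hρeq : rhoSet n (1 / (t * s)) D = ∑' x : D, f x ^ ((t ^ 2 : ℝ)) := by
      unfold rhoSet
      exact tsum_congr hgf
    rw [hρeq]
    rcases eq_or_lt_of_le hS0 with hSz | hSpos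
    · -- S = 0 : then sum of g ≤ sum of f = S = 0
      have h1 : ∑' x : D, f x ^ ((t ^ 2 : ℝ)) ≤ S :=
        hS ▸ Summable.tsum_le_tsum hgle hgsum hfs
      have : (0:ℝ) < ε / r := div_pos hε0 hr0
      linarith [h1, hSz.symm ▸ this]
    · -- S > 0
      have hptws : ∀ x : D, f x ^ ((t ^ 2 : ℝ)) ≤ S ^ ((t ^ 2 - 1 : ℝ)) * f x := by
        intro x
        have h1 : f x ^ ((t ^ 2 : ℝ)) = f x ^ ((t ^ 2 - 1 : ℝ)) * f x ^ (1:ℝ) := by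
          rw [← Real.rpow_add (hfpos x)]
          norm_num
        rw [Real.rpow_one] at h1
        rw [h1]
        apply mul_le_mul_of_nonneg_right _ (hfpos x).le
        exact Real.rpow_le_rpow (hfpos x).le (hfleS x) (by nlinarith)
      have hsum2 : Summable (fun x : D => S ^ ((t ^ 2 - 1 : ℝ)) * f x) := hfs.mul_left _
      calc ∑' x : D, f x ^ ((t ^ 2 : ℝ))
          ≤ ∑' x : D, S ^ ((t ^ 2 - 1 : ℝ)) * f x := Summable.tsum_le_tsum hptws hgsum hsum2
        _ = S ^ ((t ^ 2 - 1 : ℝ)) * S := by rw [tsum_mul_left]; rfl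
        _ ≤ ε ^ ((t ^ 2 - 1 : ℝ)) * ε := by
            apply mul_le_mul (Real.rpow_le_rpow hS0 hρ (by nlinarith)) hρ hS0
            positivity
        _ = ε / r := by rw [hεpow]; field_simp
  -- conclude with infima
  rcases Set.eq_empty_or_nonempty Sε with hne | hne
  · have hsub : Sεr ⊆ Sε := by
      intro s hs
      exact ⟨hs.1, le_trans hs.2 (div_le_self hε0.le hr)⟩
    have h2 : Sεr = ∅ := Set.subset_eq_empty (hne ▸ hsub) (by exact hne ▸ rfl)
    show sInf Sεr ≤ t * sInf Sε
    rw [h2, hne, Real.sInf_empty, mul_zero]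
  · have hbdd : BddBelow Sεr := ⟨0, fun x hx => hx.1.le⟩
    have h3 : ∀ s ∈ Sε, sInf Sεr ≤ t * s := fun s hs => csInf_le hbdd (hkey s hs)
    have h4 : sInf Sεr / t ≤ sInf Sε := by
      apply le_csInf hne
      intro s hs
      rw [div_le_iff₀ ht0]
      rw [mul_comm]
      exact h3 s hs
    show sInf Sεr ≤ t * sInf Sε
    rw [div_le_iff₀ ht0] at h4
    linarith [h4]
end
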